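/- arXiv:2412.09894 — 5 statements merged into one kernel-verified Lean document; each statement's English description precedes it below -/
import Mathlib

section
/- Let K_1, …, K_N ⊆ F be convex and nonempty and let 𝒦^ind := { f ∈ F^N : f_n ∈ K_n for all n } be the independent model set. Fix p ∈ [1, ∞]. Suppose that for each n ∈ [1:N], Δ_n^aff : ℝ^M → ℝ is an affine map that is an optimal recovery map for estimating γ_n from the observations λ relative to K_n, i.e. sup_{g ∈ K_n} |γ_n(g) − Δ_n^aff(λ(g))| ≤ sup_{g ∈ K_n} |γ_n(g) − Δ(λ(g))| for every map Δ : ℝ^M → ℝ (suprema in the extended reals). Then the affine map Δ^aff : ℝ^{M×N} → ℝ^N defined by Δ^aff(y) := (Δ_1^aff(y_1), …, Δ_N^aff(y_N)), where y_n ∈ ℝ^M denotes the n-th column of y, minimizes the worst-case error gwce_p(Δ) := sup_{f ∈ 𝒦^ind} ‖Γ(f) − Δ(Λ f)‖_{ℓ_p^N} over all maps Δ : ℝ^{M×N} → ℝ^N. -/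
open scoped BigOperators ENNReal

lemma pnorm_mono {N : ℕ} (p : ℝ≥0∞) [Fact (1 ≤ p)] {x y : Fin N → ℝ}
    (h : ∀ i, |x i| ≤ |y i|) :
    ‖(WithLp.equiv p (Fin N → ℝ)).symm x‖ ≤ ‖(WithLp.equiv p (Fin N → ℝ)).symm y‖ := by
  rcases eq_or_ne p ∞ with hp | hp
  · subst hp
    rw [PiLp.norm_eq_ciSup, PiLp.norm_eq_ciSup]
    refine ciSup_mono (Set.Finite.bddAbove (Set.finite_range _)) fun i => ?_
    simpa [Real.norm_eq_abs] using h i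
  · have hq : 0 < p.toReal := ENNReal.toReal_pos (by
      intro h0; exact absurd ((Fact.out : (1:ℝ≥0∞) ≤ p).trans h0.le) (by simp)) hp
    rw [PiLp.norm_eq_sum hq, PiLp.norm_eq_sum hq]
    apply Real.rpow_le_rpow (by positivity) _ (by positivity)
    refine Finset.sum_le_sum fun i _ => ?_
    simp only [WithLp.equiv_symm_apply, PiLp.toLp_apply, Real.norm_eq_abs]
    exact Real.rpow_le_rpow (abs_nonneg _) (h i) hq.le

lemma comp_le_pnorm {N : ℕ} (p : ℝ≥0∞) [Fact (1 ≤ p)] (y : Fin N → ℝ) (i : Fin N) :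
    |y i| ≤ ‖(WithLp.equiv p (Fin N → ℝ)).symm y‖ := by
  have := pnorm_mono p (x := Pi.single i (y i)) (y := y) (fun j => by
    rcases eq_or_ne j i with rfl | hj
    · simp
    · simp [Pi.single_eq_of_ne hj])
  simpa [WithLp.equiv_symm_apply, PiLp.norm_toLp_single, Real.norm_eq_abs] using this

lemma pnorm_le_sum {N : ℕ} (p : ℝ≥0∞) [Fact (1 ≤ p)] (y : Fin N → ℝ) :
    ‖(WithLp.equiv p (Fin N → ℝ)).symm y‖ ≤ ∑ i, |y i| := by
  have hy : (WithLp.equiv p (Fin N → ℝ)).symm y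
      = ∑ i, (WithLp.equiv p (Fin N → ℝ)).symm (Pi.single i (y i)) := by
    conv_lhs => rw [← Finset.univ_sum_single y]
    exact WithLp.toLp_sum (V := Fin N → ℝ) p _ _
  calc ‖(WithLp.equiv p (Fin N → ℝ)).symm y‖
      ≤ ∑ i, ‖(WithLp.equiv p (Fin N → ℝ)).symm (Pi.single i (y i))‖ := by
        rw [hy]; exact norm_sum_le _ _
    _ = ∑ i, |y i| := by
        simp [WithLp.equiv_symm_apply, PiLp.norm_toLp_single, Real.norm_eq_abs]

/-- Proposition 2.1 of the paper: for the independent model set, assembling componentwise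
affine optimal recovery maps yields a recovery map minimizing the `ℓ_p` worst-case error. -/
theorem stmt_3 {F : Type*} [AddCommGroup F] [Module ℝ F] {M N : ℕ}
    (lam : Fin M → F →ₗ[ℝ] ℝ) (γ : Fin N → F →ₗ[ℝ] ℝ)
    (K : Fin N → Set F) (hK : ∀ n, Convex ℝ (K n)) (hKne : ∀ n, (K n).Nonempty)
    (p : ℝ≥0∞) [Fact (1 ≤ p)]
    (Δaff : Fin N → ((Fin M → ℝ) →ᵃ[ℝ] ℝ))
    (hopt : ∀ n, ∀ Δ : (Fin M → ℝ) → ℝ,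
      (⨆ g ∈ K n, ((|γ n g - Δaff n (fun m => lam m g)| : ℝ) : EReal)) ≤
        ⨆ g ∈ K n, ((|γ n g - Δ (fun m => lam m g)| : ℝ) : EReal)) :
    ∀ Δ : (Fin M → Fin N → ℝ) → (Fin N → ℝ),
      (⨆ f ∈ {f : Fin N → F | ∀ n, f n ∈ K n},
        ((‖(WithLp.equiv p (Fin N → ℝ)).symm
            (fun n => γ n (f n) - Δaff n (fun m => lam m (f n)))‖ : ℝ) : EReal)) ≤
      ⨆ f ∈ {f : Fin N → F | ∀ n, f n ∈ K n},
        ((‖(WithLp.equiv p (Fin N → ℝ)).symm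
            (fun n => γ n (f n) - Δ (fun m n => lam m (f n)) n)‖ : ℝ) : EReal) := by
  intro Δ
  set R : EReal := ⨆ f ∈ {f : Fin N → F | ∀ n, f n ∈ K n},
      ((‖(WithLp.equiv p (Fin N → ℝ)).symm
          (fun n => γ n (f n) - Δ (fun m n => lam m (f n)) n)‖ : ℝ) : EReal) with hR
  -- the "intrinsic" quantities
  set v : Fin N → EReal := fun n => ⨆ g ∈ K n, ⨆ g' ∈ K n,
      ⨆ _ : (∀ m, lam m g = lam m g'), ((|γ n g - γ n g'| / 2 : ℝ) : EReal) with hv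
  have hvle : ∀ n, ∀ g ∈ K n, ∀ g' ∈ K n, (∀ m, lam m g = lam m g') →
      ((|γ n g - γ n g'| / 2 : ℝ) : EReal) ≤ v n := by
    intro n g hg g' hg' hl
    refine le_trans ?_ (le_iSup₂ (f := fun g (_ : g ∈ K n) => ⨆ g' ∈ K n,
      ⨆ _ : (∀ m, lam m g = lam m g'), ((|γ n g - γ n g'| / 2 : ℝ) : EReal)) g hg)
    refine le_trans ?_ (le_iSup₂ (f := fun g' (_ : g' ∈ K n) =>
      ⨆ _ : (∀ m, lam m g = lam m g'), ((|γ n g - γ n g'| / 2 : ℝ) : EReal)) g' hg')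
    exact le_iSup (fun _ : (∀ m, lam m g = lam m g') =>
      ((|γ n g - γ n g'| / 2 : ℝ) : EReal)) hl
  have hv0 : ∀ n, (0 : EReal) ≤ v n := by
    intro n
    obtain ⟨g, hg⟩ := hKne n
    have := hvle n g hg g hg (fun _ => rfl)
    simpa using this
  have hvbot : ∀ n, v n ≠ ⊥ := fun n => (lt_of_lt_of_le EReal.bot_lt_zero (hv0 n)).ne'
  have hvlt : ∀ n (r : EReal), r < v n → ∃ g g', g ∈ K n ∧ g' ∈ K n ∧
      (∀ m, lam m g = lam m g') ∧ r < ((|γ n g - γ n g'| / 2 : ℝ) : EReal) := by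
    intro n r h
    rw [hv] at h
    simp only [lt_iSup_iff] at h
    obtain ⟨g, hg, g', hg', hl, h⟩ := h
    exact ⟨g, g', hg, hg', hl, h⟩
  -- the key construction: from paired elements with equal observations, a lower bound on R
  have key : ∀ (g g' : Fin N → F), (∀ n, g n ∈ K n) → (∀ n, g' n ∈ K n) →
      (∀ n m, lam m (g n) = lam m (g' n)) →
      ((‖(WithLp.equiv p (Fin N → ℝ)).symm
          (fun n => |γ n (g n) - γ n (g' n)| / 2)‖ : ℝ) : EReal) ≤ R := by
    intro g g' hg hg' hl
    set c : Fin N → ℝ := Δ (fun m k => lam m (g k)) with hc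
    set f : Fin N → F := fun n =>
      if |γ n (g' n) - c n| ≤ |γ n (g n) - c n| then g n else g' n with hf
    have hfK : ∀ n, f n ∈ K n := by
      intro n
      by_cases h : |γ n (g' n) - c n| ≤ |γ n (g n) - c n|
      · simp only [hf, if_pos h]; exact hg n
      · simp only [hf, if_neg h]; exact hg' n
    have hfl : (fun m k => lam m (f k)) = (fun m k => lam m (g k)) := by
      funext m k
      by_cases h : |γ k (g' k) - c k| ≤ |γ k (g k) - c k|
      · simp only [hf, if_pos h]
      · simp only [hf, if_neg h]; exact (hl k m).symm
    have hcomp : ∀ n, |(|γ n (g n) - γ n (g' n)| / 2)|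
        ≤ |γ n (f n) - Δ (fun m k => lam m (f k)) n| := by
      intro n
      rw [hfl, ← hc, abs_of_nonneg (by positivity)]
      have h3 := abs_sub_le (γ n (g n)) (c n) (γ n (g' n))
      have h4 := abs_sub_comm (c n) (γ n (g' n))
      by_cases h : |γ n (g' n) - c n| ≤ |γ n (g n) - c n|
      · simp only [hf, if_pos h]; linarith
      · simp only [hf, if_neg h]; push_neg at h; linarith
    calc ((‖(WithLp.equiv p (Fin N → ℝ)).symm
          (fun n => |γ n (g n) - γ n (g' n)| / 2)‖ : ℝ) : EReal)
        ≤ ((‖(WithLp.equiv p (Fin N → ℝ)).symm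
          (fun n => γ n (f n) - Δ (fun m k => lam m (f k)) n)‖ : ℝ) : EReal) :=
          EReal.coe_le_coe_iff.mpr (pnorm_mono p hcomp)
      _ ≤ R := le_iSup₂ (f := fun f (_ : f ∈ {f : Fin N → F | ∀ n, f n ∈ K n}) =>
          ((‖(WithLp.equiv p (Fin N → ℝ)).symm
            (fun n => γ n (f n) - Δ (fun m n => lam m (f n)) n)‖ : ℝ) : EReal)) f hfK
  -- worst-case error of the affine maps is bounded by v
  have he : ∀ n, (⨆ g ∈ K n, ((|γ n g - Δaff n (fun m => lam m g)| : ℝ) : EReal)) ≤ v n := by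
    intro n
    rcases eq_or_ne (v n) ⊤ with h | h
    · rw [h]; exact le_top
    · set w : ℝ := (v n).toReal with hw
      have hvw : v n = (w : EReal) := (EReal.coe_toReal h (hvbot n)).symm
      have hdiam : ∀ g ∈ K n, ∀ g' ∈ K n, (∀ m, lam m g = lam m g') →
          |γ n g - γ n g'| ≤ 2 * w := by
        intro g hg g' hg' hlg
        have := hvle n g hg g' hg' hlg
        rw [hvw] at this
        have := EReal.coe_le_coe_iff.mp this
        linarith
      set Δs : (Fin M → ℝ) → ℝ := fun y =>
        sInf {t | ∃ g, g ∈ K n ∧ (∀ m, lam m g = y m) ∧ γ n g = t} + w with hΔs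
      refine le_trans (hopt n Δs) ?_
      rw [hvw]
      refine iSup₂_le fun g hg => ?_
      set S : Set ℝ := {t | ∃ g', g' ∈ K n ∧ (∀ m, lam m g' = lam m g) ∧ γ n g' = t} with hS
      have hmem : γ n g ∈ S := ⟨g, hg, fun m => rfl, rfl⟩
      have hlb : ∀ t ∈ S, γ n g - 2 * w ≤ t := by
        rintro t ⟨g', hg', hlg, rfl⟩
        have h5 := hdiam g hg g' hg' (fun m => (hlg m).symm)
        linarith [le_abs_self (γ n g - γ n g')]
      have hbdd : BddBelow S := ⟨γ n g - 2 * w, hlb⟩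
      have h1 : sInf S ≤ γ n g := csInf_le hbdd hmem
      have h2 : γ n g - 2 * w ≤ sInf S := le_csInf ⟨_, hmem⟩ hlb
      have hΔval : Δs (fun m => lam m g) = sInf S + w := rfl
      refine EReal.coe_le_coe_iff.mpr ?_
      rw [hΔval, abs_le]
      constructor <;> linarith
  -- main argument
  refine iSup₂_le fun f hf => ?_
  by_cases hfin : ∀ n, v n ≠ ⊤
  · set w : Fin N → ℝ := fun n => (v n).toReal with hwdef
    have hvn : ∀ n, v n = ((w n : ℝ) : EReal) :=
      fun n => (EReal.coe_toReal (hfin n) (hvbot n)).symm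
    have hwnn : ∀ n, 0 ≤ w n := fun n => by
      simpa using EReal.toReal_le_toReal (hv0 n) (by simp) (hfin n)
    have hA : ∀ n, |γ n (f n) - Δaff n (fun m => lam m (f n))| ≤ w n := by
      intro n
      have h1 : ((|γ n (f n) - Δaff n (fun m => lam m (f n))| : ℝ) : EReal)
          ≤ ⨆ g ∈ K n, ((|γ n g - Δaff n (fun m => lam m g)| : ℝ) : EReal) :=
        le_iSup₂ (f := fun g (_ : g ∈ K n) =>
          ((|γ n g - Δaff n (fun m => lam m g)| : ℝ) : EReal)) (f n) (hf n)
      have h2 := h1.trans ((he n).trans_eq (hvn n))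
      exact EReal.coe_le_coe_iff.mp h2
    have hVle : ((‖(WithLp.equiv p (Fin N → ℝ)).symm
        (fun n => γ n (f n) - Δaff n (fun m => lam m (f n)))‖ : ℝ) : EReal)
        ≤ ((‖(WithLp.equiv p (Fin N → ℝ)).symm w‖ : ℝ) : EReal) := by
      refine EReal.coe_le_coe_iff.mpr (pnorm_mono p fun n => ?_)
      rw [abs_of_nonneg (hwnn n)]
      exact hA n
    refine hVle.trans ?_
    set V : ℝ := ‖(WithLp.equiv p (Fin N → ℝ)).symm w‖ with hVdef
    have claim : ∀ r : ℝ, r < V → ((r : ℝ) : EReal) ≤ R := by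
      intro r hr
      set ε : ℝ := (V - r) / (N + 1) with hε
      have hεpos : 0 < ε := by
        apply div_pos (by linarith) (by positivity)
      have hchoice : ∀ n, ∃ g g', g ∈ K n ∧ g' ∈ K n ∧ (∀ m, lam m g = lam m g') ∧
          w n - ε < |γ n g - γ n g'| / 2 ∧ |γ n g - γ n g'| / 2 ≤ w n := by
        intro n
        have hlt : ((w n - ε : ℝ) : EReal) < v n := by
          rw [hvn n]; exact_mod_cast sub_lt_self _ hεpos
        obtain ⟨g, g', hg, hg', hlg, hgt⟩ := hvlt n _ hlt
        refine ⟨g, g', hg, hg', hlg, by exact_mod_cast hgt, ?_⟩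
        have := hvle n g hg g' hg' hlg
        rw [hvn n] at this
        exact_mod_cast this
      choose g g' hg hg' hlg hlow hup using hchoice
      have hkey := key g g' hg hg' hlg
      set d : Fin N → ℝ := fun n => |γ n (g n) - γ n (g' n)| / 2 with hd
      have hlow' : ∀ n, w n - ε < d n := fun n => hlow n
      have hup' : ∀ n, d n ≤ w n := fun n => hup n
      have hsplit : (WithLp.equiv p (Fin N → ℝ)).symm w
          = (WithLp.equiv p (Fin N → ℝ)).symm d
            + (WithLp.equiv p (Fin N → ℝ)).symm (fun n => w n - d n) := by
        rw [WithLp.equiv_symm_apply, ← WithLp.toLp_add]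
        congr 1
        funext n
        show w n = d n + (w n - d n)
        ring
      have hd1 : V ≤ ‖(WithLp.equiv p (Fin N → ℝ)).symm d‖
          + ‖(WithLp.equiv p (Fin N → ℝ)).symm (fun n => w n - d n)‖ := by
        rw [hVdef, hsplit]; exact norm_add_le _ _
      have hd2 : ‖(WithLp.equiv p (Fin N → ℝ)).symm (fun n => w n - d n)‖
          ≤ ∑ _n : Fin N, ε := by
        refine (pnorm_le_sum p _).trans (Finset.sum_le_sum fun n _ => ?_)
        rw [abs_of_nonneg (by linarith [hup' n])]
        linarith [hlow' n]
      have hd3 : (∑ _n : Fin N, ε) = N * ε := by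
        simp [Finset.sum_const, mul_comm]
      have hrd : r ≤ ‖(WithLp.equiv p (Fin N → ℝ)).symm d‖ := by
        have hNε : ((N : ℝ) + 1) * ε = V - r := by
          rw [hε]; field_simp
        rw [hd3] at hd2
        linarith [hεpos]
      exact (EReal.coe_le_coe_iff.mpr hrd).trans hkey
    by_contra hcon
    push_neg at hcon
    obtain ⟨r, hr1, hr2⟩ := EReal.exists_between_coe_real hcon
    exact absurd (claim r (by exact_mod_cast hr2)) (not_le.mpr hr1)
  · push_neg at hfin
    obtain ⟨n0, hn0⟩ := hfin
    have htop : ∀ r : ℝ, ((r : ℝ) : EReal) ≤ R := by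
      intro r
      have hlt : ((r : ℝ) : EReal) < v n0 := by rw [hn0]; exact EReal.coe_lt_top r
      obtain ⟨a, b, ha, hb, hl0, hgt⟩ := hvlt n0 _ hlt
      set g : Fin N → F := Function.update (fun k => (hKne k).some) n0 a with hgdef
      set g' : Fin N → F := Function.update (fun k => (hKne k).some) n0 b with hg'def
      have hgK : ∀ k, g k ∈ K k := by
        intro k
        rcases eq_or_ne k n0 with rfl | hk
        · rw [hgdef, Function.update_self]; exact ha
        · rw [hgdef, Function.update_of_ne hk]; exact (hKne k).some_mem
      have hg'K : ∀ k, g' k ∈ K k := by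
        intro k
        rcases eq_or_ne k n0 with rfl | hk
        · rw [hg'def, Function.update_self]; exact hb
        · rw [hg'def, Function.update_of_ne hk]; exact (hKne k).some_mem
      have hlg : ∀ k m, lam m (g k) = lam m (g' k) := by
        intro k m
        rcases eq_or_ne k n0 with rfl | hk
        · rw [hgdef, hg'def, Function.update_self, Function.update_self]; exact hl0 m
        · rw [hgdef, hg'def, Function.update_of_ne hk, Function.update_of_ne hk]
      have hkey := key g g' hgK hg'K hlg
      have hcomp := comp_le_pnorm p (fun n => |γ n (g n) - γ n (g' n)| / 2) n0
      have hval : |γ n0 (g n0) - γ n0 (g' n0)| / 2 = |γ n0 a - γ n0 b| / 2 := by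
        rw [hgdef, hg'def, Function.update_self, Function.update_self]
      have hgt' : r < |γ n0 a - γ n0 b| / 2 := by exact_mod_cast hgt
      have hr2 : r ≤ ‖(WithLp.equiv p (Fin N → ℝ)).symm
          (fun n => |γ n (g n) - γ n (g' n)| / 2)‖ := by
        refine le_trans ?_ hcomp
        rw [hval, abs_of_nonneg (by positivity)]
        exact hgt'.le
      exact (EReal.coe_le_coe_iff.mpr hr2).trans hkey
    have hRtop : R = ⊤ := by
      by_contra hcon
      obtain ⟨r, hr1, hr2⟩ := EReal.exists_between_coe_real (lt_top_iff_ne_top.mpr hcon)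
      exact absurd (htop r) (not_le.mpr hr1)
    rw [hRtop]
    exact le_top
end

section
/- Let K_1, …, K_N ⊆ F be convex, let A ∈ ℝ^{L×N} and b ∈ F^L, and let 𝒦^dep := { f ∈ F^N : f_n ∈ K_n for all n, and Σ_{n=1}^N a_{ℓ,n} f_n = b_ℓ for all ℓ ∈ [1:L] } be the dependent model set, assumed nonempty. Then there exists an affine map Δ^aff : ℝ^{M×N} → ℝ^N (i.e. of the form Δ^aff(y) = Σ_{m=1}^M Σ_{n=1}^N y_{m,n} c^{(m,n)} + d with c^{(m,n)}, d ∈ ℝ^N) that minimizes the ℓ_∞ worst-case error gwce_∞(Δ) := sup_{f ∈ 𝒦^dep} ‖Γ(f) − Δ(Λ f)‖_{ℓ_∞^N} over all maps Δ : ℝ^{M×N} → ℝ^N. -/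
open scoped BigOperators


open Submodule

/-- combination helper -/
lemma comb_aux {E : Type*} [AddCommGroup E] [Module ℝ E]
    {C : Set E} (hC : Convex ℝ C) (c₀ : E) (hc₀ : c₀ ∈ C)
    {l₁ l₂ : ℝ} (h₁ : 0 ≤ l₁) (h₂ : 0 ≤ l₂)
    {x₁ y₁ x₂ y₂ : E} (hx₁ : x₁ ∈ C) (hy₁ : y₁ ∈ C) (hx₂ : x₂ ∈ C) (hy₂ : y₂ ∈ C) :
    ∃ x ∈ C, ∃ y ∈ C,
      l₁ • (x₁ - y₁) + l₂ • (x₂ - y₂) = (l₁ + l₂) • (x - y) := by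
  rcases eq_or_lt_of_le (add_nonneg h₁ h₂) with hL | hL
  · have e1 : l₁ = 0 := by linarith
    have e2 : l₂ = 0 := by linarith
    refine ⟨c₀, hc₀, c₀, hc₀, ?_⟩
    simp [e1, e2, ← hL]
  · have hL0 : l₁ + l₂ ≠ 0 := ne_of_gt hL
    refine ⟨(l₁ / (l₁ + l₂)) • x₁ + (l₂ / (l₁ + l₂)) • x₂,
      hC hx₁ hx₂ (by positivity) (by positivity) (by field_simp),
      (l₁ / (l₁ + l₂)) • y₁ + (l₂ / (l₁ + l₂)) • y₂,
      hC hy₁ hy₂ (by positivity) (by positivity) (by field_simp), ?_⟩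
    match_scalars <;> field_simp <;> ring

/-- Key sandwich lemma: a linear functional with prescribed value on `e` and
oscillation at most `2r` on a convex set whose `e`-thickness is at most `2r`. -/
lemma key_affine {E : Type*} [AddCommGroup E] [Module ℝ E]
    (C : Set E) (hC : Convex ℝ C) (hCne : C.Nonempty) (e : E) (r : ℝ)
    (hth : ∀ x ∈ C, ∀ y ∈ C, ∀ t : ℝ, x - y = t • e → |t| ≤ 2 * r) :
    ∃ ψ : E →ₗ[ℝ] ℝ, ψ e = 1 ∧ ∀ x ∈ C, ∀ y ∈ C, ψ x - ψ y ≤ 2 * r := by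
  obtain ⟨c₀, hc₀⟩ := hCne
  have he : e ≠ 0 := by
    intro h
    have h1 := hth c₀ hc₀ c₀ hc₀ (2 * |r| + 1) (by simp [h])
    have h2 : |2 * |r| + 1| = 2 * |r| + 1 := abs_of_pos (by positivity)
    have h3 := le_abs_self r
    linarith [abs_nonneg r]
  -- the subspace spanned by e and differences of C
  set D : Set E := {w | ∃ x ∈ C, ∃ y ∈ C, w = x - y} with hD
  set S : Submodule ℝ E := Submodule.span ℝ (insert e D) with hS
  have heS : e ∈ S := subset_span (Set.mem_insert _ _)
  have hDS : ∀ x ∈ C, ∀ y ∈ C, x - y ∈ S := fun x hx y hy =>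
    subset_span (Set.mem_insert_iff.2 (Or.inr ⟨x, hx, y, hy, rfl⟩))
  -- representation of elements of S
  have hrep : ∀ w ∈ S, ∃ l : ℝ, 0 ≤ l ∧ ∃ μ : ℝ, ∃ x ∈ C, ∃ y ∈ C,
      w = l • (x - y) + μ • e := by
    let T : Submodule ℝ E :=
      { carrier := {w | ∃ l : ℝ, 0 ≤ l ∧ ∃ μ : ℝ, ∃ x ∈ C, ∃ y ∈ C,
          w = l • (x - y) + μ • e}
        zero_mem' := ⟨0, le_rfl, 0, c₀, hc₀, c₀, hc₀, by simp⟩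
        add_mem' := by
          rintro w₁ w₂ ⟨l₁, h₁, μ₁, x₁, hx₁, y₁, hy₁, rfl⟩
            ⟨l₂, h₂, μ₂, x₂, hx₂, y₂, hy₂, rfl⟩
          obtain ⟨x, hx, y, hy, hxy⟩ := comb_aux hC c₀ hc₀ h₁ h₂ hx₁ hy₁ hx₂ hy₂
          exact ⟨l₁ + l₂, add_nonneg h₁ h₂, μ₁ + μ₂, x, hx, y, hy, by
            rw [← hxy]; module⟩
        smul_mem' := by
          rintro c w ⟨l, hl, μ, x, hx, y, hy, rfl⟩
          rcases le_or_gt 0 c with hc | hc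
          · exact ⟨c * l, mul_nonneg hc hl, c * μ, x, hx, y, hy, by
              rw [smul_add, smul_smul, smul_smul]⟩
          · refine ⟨(-c) * l, mul_nonneg (by linarith) hl, c * μ, y, hy, x, hx, ?_⟩
            rw [smul_add, smul_smul, smul_smul]
            module }
    have hsub : S ≤ T := by
      rw [hS, Submodule.span_le]
      rintro w hw
      rcases Set.mem_insert_iff.1 hw with rfl | ⟨x, hx, y, hy, rfl⟩
      · exact ⟨0, le_rfl, 1, c₀, hc₀, c₀, hc₀, by simp⟩
      · exact ⟨1, zero_le_one, 0, x, hx, y, hy, by simp⟩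
    exact fun w hw => hsub hw
  -- core inequality
  have hcore : ∀ l : ℝ, 0 ≤ l → ∀ t : ℝ, ∀ x ∈ C, ∀ y ∈ C,
      l • (x - y) = t • e → t ≤ 2 * r * l := by
    intro l hl t x hx y hy hxy
    rcases eq_or_lt_of_le hl with hl0 | hl0
    · rw [← hl0, zero_smul] at hxy
      have ht : t = 0 := by
        rcases smul_eq_zero.1 hxy.symm with h | h
        · exact h
        · exact absurd h he
      rw [ht, ← hl0]; simp
    · have : x - y = (t / l) • e := by
        rw [div_eq_inv_mul, ← smul_smul, ← hxy, smul_smul,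
          inv_mul_cancel₀ (ne_of_gt hl0), one_smul]
      have h1 := hth x hx y hy _ this
      have h2 : t / l ≤ 2 * r := le_trans (le_abs_self _) h1
      calc t = (t / l) * l := by field_simp
        _ ≤ 2 * r * l := mul_le_mul_of_nonneg_right h2 hl
  -- the convex cone in S
  let KK : ConvexCone ℝ S :=
    { carrier := {w : S | ∃ l : ℝ, 0 ≤ l ∧ ∃ x ∈ C, ∃ y ∈ C,
        (w : E) = l • ((2 * r) • e - (x - y))}
      smul_mem' := by
        rintro c hc w ⟨l, hl, x, hx, y, hy, hw⟩
        refine ⟨c * l, mul_nonneg (le_of_lt hc) hl, x, hx, y, hy, ?_⟩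
        rw [Submodule.coe_smul, hw, smul_smul]
      add_mem' := by
        rintro w₁ ⟨l₁, h₁, x₁, hx₁, y₁, hy₁, hw₁⟩ w₂ ⟨l₂, h₂, x₂, hx₂, y₂, hy₂, hw₂⟩
        obtain ⟨x, hx, y, hy, hxy⟩ := comb_aux hC c₀ hc₀ h₁ h₂ hx₁ hy₁ hx₂ hy₂
        refine ⟨l₁ + l₂, add_nonneg h₁ h₂, x, hx, y, hy, ?_⟩
        push_cast
        rw [hw₁, hw₂]
        linear_combination (norm := module) -hxy }
  have he' : (⟨e, heS⟩ : S) ≠ 0 := by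
    intro h
    exact he (by simpa using congrArg (Subtype.val) h)
  set f : S →ₗ.[ℝ] ℝ := LinearPMap.mkSpanSingleton (⟨e, heS⟩ : S) (1 : ℝ) he'
  have hdom : f.domain = Submodule.span ℝ {(⟨e, heS⟩ : S)} := rfl
  have hnonneg : ∀ x : f.domain, (x : S) ∈ KK → 0 ≤ f x := by
    rintro ⟨x, hx⟩ hxK
    rw [hdom] at hx
    obtain ⟨cc, hcc⟩ := Submodule.mem_span_singleton.1 hx
    have hfx : f ⟨x, hx⟩ = cc • (1 : ℝ) := by
      have : (⟨x, hx⟩ : f.domain) = ⟨cc • ⟨e, heS⟩, by rw [hcc]; exact hx⟩ :=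
        Subtype.ext hcc.symm
      rw [this]
      exact LinearPMap.mkSpanSingleton'_apply _ _ _ cc _
    obtain ⟨l, hl, x', hx', y', hy', hKm⟩ := hxK
    have hcoe : (x : E) = cc • e := by
      rw [← hcc]; rfl
    have heq : l • (x' - y') = (2 * r * l - cc) • e := by
      rw [hcoe] at hKm
      linear_combination (norm := module) hKm
    have := hcore l hl (2 * r * l - cc) x' hx' y' hy' heq
    rw [hfx, smul_eq_mul, mul_one]
    linarith
  have hdense : ∀ w : S, ∃ x : f.domain, (x : S) + w ∈ KK := by
    intro w
    obtain ⟨l, hl, μ, x, hx, y, hy, hw⟩ := hrep (w : E) w.2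
    refine ⟨⟨(2 * r * l - μ) • ⟨e, heS⟩, by
      rw [hdom]; exact Submodule.smul_mem _ _ (Submodule.mem_span_singleton_self _)⟩,
      l, hl, y, hy, x, hx, ?_⟩
    push_cast
    rw [hw]
    module
  obtain ⟨g, hgf, hgK⟩ := riesz_extension (KK.toPointedCone ⟨0, le_rfl, c₀, hc₀, c₀, hc₀, by simp⟩) f hnonneg hdense
  have hge : g ⟨e, heS⟩ = 1 := by
    have hmem : (⟨e, heS⟩ : S) ∈ f.domain := by
      rw [hdom]; exact Submodule.mem_span_singleton_self _
    have h1 := hgf ⟨⟨e, heS⟩, hmem⟩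
    have h2 : f ⟨⟨e, heS⟩, hmem⟩ = 1 := LinearPMap.mkSpanSingleton_apply ℝ ℝ he' 1
    rw [h2] at h1
    exact h1
  -- extend g to all of E
  obtain ⟨q, hq⟩ := Submodule.exists_isCompl S
  set π := S.linearProjOfIsCompl q hq
  refine ⟨g ∘ₗ π, ?_, ?_⟩
  · have : π e = ⟨e, heS⟩ := Submodule.linearProjOfIsCompl_apply_left hq ⟨e, heS⟩
    simp [LinearMap.comp_apply, this, hge]
  · intro x hx y hy
    have hxyS : x - y ∈ S := hDS x hx y hy
    have hgd : g ⟨x - y, hxyS⟩ ≤ 2 * r := by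
      have hmemK : ((2 * r) • (⟨e, heS⟩ : S) - ⟨x - y, hxyS⟩) ∈ KK :=
        ⟨1, zero_le_one, x, hx, y, hy, by push_cast; module⟩
      have h0 := hgK _ hmemK
      rw [map_sub, map_smul] at h0
      rw [hge] at h0
      simp only [smul_eq_mul, mul_one] at h0
      linarith
    have hπ : π (x - y) = ⟨x - y, hxyS⟩ :=
      Submodule.linearProjOfIsCompl_apply_left hq ⟨x - y, hxyS⟩
    calc (g ∘ₗ π) x - (g ∘ₗ π) y = (g ∘ₗ π) (x - y) := by rw [map_sub]
      _ = g ⟨x - y, hxyS⟩ := by rw [LinearMap.comp_apply, hπ]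
      _ ≤ 2 * r := hgd

lemma single_decomp {M N : ℕ} (y : Fin M → Fin N → ℝ) :
    y = ∑ m, ∑ n, y m n • (Pi.single m (Pi.single n 1) : Fin M → Fin N → ℝ) := by
  funext m' n'
  simp [Finset.sum_apply, apply_ite (fun g : Fin N → ℝ => g n'), Pi.single_apply]

lemma phi_decomp {M N : ℕ} (φ : ((Fin M → Fin N → ℝ) × ℝ) →ₗ[ℝ] ℝ)
    (y : Fin M → Fin N → ℝ) :
    φ (y, 0) = ∑ m, ∑ n, y m n * φ (Pi.single m (Pi.single n 1), 0) := by
  have h : ((y, (0:ℝ)) : (Fin M → Fin N → ℝ) × ℝ)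
      = ∑ m, ∑ n, y m n •
        (((Pi.single m (Pi.single n 1) : Fin M → Fin N → ℝ)), (0:ℝ)) := by
    apply Prod.ext
    · simp only [Prod.fst_sum, Prod.smul_mk]
      exact single_decomp y
    · simp [Prod.snd_sum]
  rw [h, map_sum]
  refine Finset.sum_congr rfl fun m _ => ?_
  rw [map_sum]
  refine Finset.sum_congr rfl fun n _ => ?_
  rw [map_smul, smul_eq_mul]

open scoped BigOperators

/-- Proposition 2.2 of the paper: for the dependent model set
`𝒦^dep = {f : f_n ∈ K_n, Σ_n a_{ℓ,n} f_n = b_ℓ}` with convex `K_n`, the `ℓ_∞` worst-case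
error of prediction is minimized by an affine recovery map. -/
theorem stmt_4 {F : Type*} [AddCommGroup F] [Module ℝ F] {M N L : ℕ}
    (lam : Fin M → F →ₗ[ℝ] ℝ) (γ : Fin N → F →ₗ[ℝ] ℝ)
    (K : Fin N → Set F) (hK : ∀ n, Convex ℝ (K n))
    (A : Fin L → Fin N → ℝ) (b : Fin L → F)
    (Kdep : Set (Fin N → F))
    (hKdep : Kdep = {f : Fin N → F | (∀ n, f n ∈ K n) ∧ ∀ ℓ, ∑ n, A ℓ n • f n = b ℓ})
    (hne : Kdep.Nonempty) :
    ∃ (c : Fin M → Fin N → (Fin N → ℝ)) (d : Fin N → ℝ),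
      ∀ Δ : (Fin M → Fin N → ℝ) → (Fin N → ℝ),
        (⨆ f ∈ Kdep,
          ((‖(fun n => γ n (f n)) - ((∑ m, ∑ n, lam m (f n) • c m n) + d)‖ : ℝ) : EReal)) ≤
        ⨆ f ∈ Kdep,
          ((‖(fun n => γ n (f n)) - Δ (fun m n => lam m (f n))‖ : ℝ) : EReal) := by
  classical
  obtain ⟨f₀, hf₀⟩ := hne
  have hKconv : Convex ℝ Kdep := by
    rw [hKdep]
    intro f hf g hg a a' ha ha' haa
    simp only [Set.mem_setOf_eq, Pi.add_apply, Pi.smul_apply] at hf hg ⊢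
    constructor
    · intro n
      exact hK n (hf.1 n) (hg.1 n) ha ha' haa
    · intro ℓ
      calc ∑ n, A ℓ n • (a • f n + a' • g n)
          = ∑ n, (a • (A ℓ n • f n) + a' • (A ℓ n • g n)) := by
            refine Finset.sum_congr rfl fun n _ => ?_
            rw [smul_add, smul_comm (A ℓ n) a, smul_comm (A ℓ n) a']
        _ = a • ∑ n, A ℓ n • f n + a' • ∑ n, A ℓ n • g n := by
            rw [Finset.sum_add_distrib, Finset.smul_sum, Finset.smul_sum]
        _ = b ℓ := by rw [hf.2 ℓ, hg.2 ℓ, ← add_smul, haa, one_smul]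
  -- the sets of differences of the quantity of interest over data-indistinguishable pairs
  let Sd : Fin N → Set ℝ := fun k =>
    {v | ∃ f ∈ Kdep, ∃ g ∈ Kdep,
      (fun m n => lam m (f n)) = (fun m n => lam m (g n)) ∧ v = γ k (f k) - γ k (g k)}
  by_cases hbdd : ∀ k, BddAbove (Sd k)
  · -- bounded case : construct the affine map
    have h0mem : ∀ k, (0:ℝ) ∈ Sd k := fun k => ⟨f₀, hf₀, f₀, hf₀, rfl, by ring⟩
    let r : Fin N → ℝ := fun k => sSup (Sd k) / 2
    have hr : ∀ k, r k = sSup (Sd k) / 2 := fun _ => rfl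
    have hr0 : ∀ k, 0 ≤ r k := by
      intro k
      have := le_csSup (hbdd k) (h0mem k)
      rw [hr]; linarith
    have hrth : ∀ k, ∀ f ∈ Kdep, ∀ g ∈ Kdep,
        (fun m n => lam m (f n)) = (fun m n => lam m (g n)) →
        |γ k (f k) - γ k (g k)| ≤ 2 * r k := by
      intro k f hf g hg hΛ
      have h1 : γ k (f k) - γ k (g k) ≤ sSup (Sd k) :=
        le_csSup (hbdd k) ⟨f, hf, g, hg, hΛ, rfl⟩
      have h2 : γ k (g k) - γ k (f k) ≤ sSup (Sd k) :=
        le_csSup (hbdd k) ⟨g, hg, f, hf, hΛ.symm, rfl⟩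
      rw [abs_le, hr]
      constructor <;> linarith
    have hψex : ∀ k : Fin N, ∃ ψ : ((Fin M → Fin N → ℝ) × ℝ) →ₗ[ℝ] ℝ,
        ψ ((0 : Fin M → Fin N → ℝ), (1:ℝ)) = 1 ∧
        ∀ f ∈ Kdep, ∀ g ∈ Kdep,
          ψ (fun m n => lam m (f n), γ k (f k))
            - ψ (fun m n => lam m (g n), γ k (g k)) ≤ 2 * r k := by
      intro k
      let Lm : (Fin N → F) →ₗ[ℝ] ((Fin M → Fin N → ℝ) × ℝ) :=
        LinearMap.prod
          (LinearMap.pi fun m => LinearMap.pi fun n => (lam m).comp (LinearMap.proj n))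
          ((γ k).comp (LinearMap.proj k))
      have hLm : ∀ f, Lm f = (fun m n => lam m (f n), γ k (f k)) := fun f => rfl
      have hC : Convex ℝ (Lm '' Kdep) := hKconv.linear_image Lm
      have hCne : (Lm '' Kdep).Nonempty := ⟨Lm f₀, ⟨f₀, hf₀, rfl⟩⟩
      have hth : ∀ x ∈ Lm '' Kdep, ∀ y ∈ Lm '' Kdep, ∀ t : ℝ,
          x - y = t • ((0 : Fin M → Fin N → ℝ), (1:ℝ)) → |t| ≤ 2 * r k := by
        rintro x ⟨f, hf, rfl⟩ y ⟨g, hg, rfl⟩ t ht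
        rw [hLm, hLm] at ht
        have h1 := congrArg Prod.fst ht
        have h2 := congrArg Prod.snd ht
        simp only [Prod.fst_sub, Prod.snd_sub, Prod.smul_mk, smul_zero, smul_eq_mul,
          mul_one] at h1 h2
        have hΛ : (fun m n => lam m (f n)) = (fun m n => lam m (g n)) :=
          sub_eq_zero.1 h1
        rw [← h2]
        exact hrth k f hf g hg hΛ
      obtain ⟨ψ, hψ1, hψ2⟩ := key_affine _ hC hCne _ _ hth
      refine ⟨ψ, hψ1, fun f hf g hg => ?_⟩
      have := hψ2 (Lm f) ⟨f, hf, rfl⟩ (Lm g) ⟨g, hg, rfl⟩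
      rwa [hLm, hLm] at this
    choose ψ hψ1 hψ2 using hψex
    let cc : Fin M → Fin N → (Fin N → ℝ) :=
      fun m n => fun k => -(ψ k (Pi.single m (Pi.single n 1), 0))
    let dd : Fin N → ℝ := fun k =>
      sSup ((fun f => ψ k (fun m n => lam m (f n), γ k (f k))) '' Kdep) - r k
    have hval : ∀ k, ∀ f ∈ Kdep,
        γ k (f k) - ((∑ m, ∑ n, lam m (f n) • cc m n) + dd) k
          = ψ k (fun m n => lam m (f n), γ k (f k)) - dd k := by
      intro k f hf
      have hsum : (∑ m, ∑ n, lam m (f n) • cc m n) k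
          = ∑ m, ∑ n, lam m (f n) * cc m n k := by
        simp [Finset.sum_apply]
      have hdec : ψ k (fun m n => lam m (f n), γ k (f k))
          = γ k (f k) + ψ k ((fun m n => lam m (f n)), 0) := by
        have heq : ((fun m n => lam m (f n), γ k (f k)) : (Fin M → Fin N → ℝ) × ℝ)
            = ((fun m n => lam m (f n)), (0:ℝ))
              + (γ k (f k)) • ((0 : Fin M → Fin N → ℝ), (1:ℝ)) := by
          rw [Prod.smul_mk]
          simp
        rw [heq, map_add, map_smul, hψ1 k, smul_eq_mul, mul_one]
        ring
      have hφ : ψ k ((fun m n => lam m (f n)), 0)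
          = ∑ m, ∑ n, lam m (f n) * ψ k (Pi.single m (Pi.single n 1), 0) :=
        phi_decomp (ψ k) _
      have hccsum : ∑ m, ∑ n, lam m (f n) * cc m n k
          = -(∑ m, ∑ n, lam m (f n) * ψ k (Pi.single m (Pi.single n 1), 0)) := by
        simp [cc, mul_neg, Finset.sum_neg_distrib]
      rw [Pi.add_apply, hsum, hccsum, hdec, hφ]
      ring
    have hctr : ∀ k, ∀ f ∈ Kdep,
        |ψ k (fun m n => lam m (f n), γ k (f k)) - dd k| ≤ r k := by
      intro k f hf
      set img := (fun f => ψ k (fun m n => lam m (f n), γ k (f k))) '' Kdep with himg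
      have hne' : img.Nonempty := ⟨_, ⟨f₀, hf₀, rfl⟩⟩
      have hbddimg : BddAbove img := by
        refine ⟨ψ k (fun m n => lam m (f n), γ k (f k)) + 2 * r k, ?_⟩
        rintro v ⟨g, hg, rfl⟩
        have := hψ2 k g hg f hf
        linarith
      have h1 : ψ k (fun m n => lam m (f n), γ k (f k)) ≤ sSup img :=
        le_csSup hbddimg ⟨f, hf, rfl⟩
      have h2 : sSup img ≤ ψ k (fun m n => lam m (f n), γ k (f k)) + 2 * r k := by
        apply csSup_le hne'
        rintro v ⟨g, hg, rfl⟩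
        have := hψ2 k g hg f hf
        linarith
      have hdd : dd k = sSup img - r k := rfl
      rw [abs_le, hdd]
      constructor <;> linarith
    refine ⟨cc, dd, fun Δ => ?_⟩
    apply iSup₂_le
    intro f hf
    set a := ⨆ f ∈ Kdep,
        ((‖(fun n => γ n (f n)) - Δ (fun m n => lam m (f n))‖ : ℝ) : EReal) with ha
    have hfa : ∀ g ∈ Kdep,
        ((‖(fun n => γ n (g n)) - Δ (fun m n => lam m (g n))‖ : ℝ) : EReal) ≤ a := by
      intro g hg
      exact le_iSup₂ (f := fun g (_ : g ∈ Kdep) =>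
        ((‖(fun n => γ n (g n)) - Δ (fun m n => lam m (g n))‖ : ℝ) : EReal)) g hg
    by_cases htop : a = ⊤
    · rw [htop]; exact le_top
    have hbot : a ≠ ⊥ := by
      intro h
      have := hfa f hf
      rw [h, le_bot_iff] at this
      exact EReal.coe_ne_bot _ this
    have hay : ((a.toReal : ℝ) : EReal) = a := EReal.coe_toReal htop hbot
    set y := a.toReal
    have hyfa : ∀ g ∈ Kdep,
        ‖(fun n => γ n (g n)) - Δ (fun m n => lam m (g n))‖ ≤ y := by
      intro g hg
      have := hfa g hg
      rw [← hay] at this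
      exact_mod_cast this
    have hy0 : 0 ≤ y := le_trans (norm_nonneg _) (hyfa f hf)
    rw [← hay]
    have hkey : ‖(fun n => γ n (f n)) - ((∑ m, ∑ n, lam m (f n) • cc m n) + dd)‖ ≤ y := by
      rw [pi_norm_le_iff_of_nonneg hy0]
      intro k
      have h1 : ((fun n => γ n (f n)) - ((∑ m, ∑ n, lam m (f n) • cc m n) + dd)) k
          = ψ k (fun m n => lam m (f n), γ k (f k)) - dd k := by
        rw [Pi.sub_apply]
        exact hval k f hf
      rw [Real.norm_eq_abs, h1]
      have h2 := hctr k f hf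
      have h3 : r k ≤ y := by
        have hsup : sSup (Sd k) ≤ 2 * y := by
          apply csSup_le ⟨0, h0mem k⟩
          rintro v ⟨f', hf', g', hg', hΛ', rfl⟩
          have hΔ : Δ (fun m n => lam m (f' n)) = Δ (fun m n => lam m (g' n)) := by
            rw [hΛ']
          have hb1 : |γ k (f' k) - Δ (fun m n => lam m (f' n)) k|
              ≤ ‖(fun n => γ n (f' n)) - Δ (fun m n => lam m (f' n))‖ := by
            have := norm_le_pi_norm
              ((fun n => γ n (f' n)) - Δ (fun m n => lam m (f' n))) k
            simpa [Real.norm_eq_abs] using this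
          have hb2 : |γ k (g' k) - Δ (fun m n => lam m (g' n)) k|
              ≤ ‖(fun n => γ n (g' n)) - Δ (fun m n => lam m (g' n))‖ := by
            have := norm_le_pi_norm
              ((fun n => γ n (g' n)) - Δ (fun m n => lam m (g' n))) k
            simpa [Real.norm_eq_abs] using this
          have he : γ k (f' k) - γ k (g' k)
              = (γ k (f' k) - Δ (fun m n => lam m (f' n)) k)
                - (γ k (g' k) - Δ (fun m n => lam m (g' n)) k) := by
            rw [hΔ]; ring
          have l1 := le_abs_self (γ k (f' k) - Δ (fun m n => lam m (f' n)) k)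
          have l2 := neg_abs_le (γ k (g' k) - Δ (fun m n => lam m (g' n)) k)
          have m1 := hyfa f' hf'
          have m2 := hyfa g' hg'
          linarith [he]
        rw [hr]; linarith
      have := abs_le.1 h2
      rw [abs_le]
      constructor <;> linarith
    exact_mod_cast hkey
  · -- unbounded case : every map has infinite worst-case error
    push_neg at hbdd
    obtain ⟨k₀, hk₀⟩ := hbdd
    refine ⟨fun _ _ => 0, 0, fun Δ => ?_⟩
    have htop : (⨆ f ∈ Kdep,
        ((‖(fun n => γ n (f n)) - Δ (fun m n => lam m (f n))‖ : ℝ) : EReal)) = ⊤ := by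
      rw [EReal.eq_top_iff_forall_lt]
      intro z
      obtain ⟨v, hv, hzv⟩ := not_bddAbove_iff.1 hk₀ (2 * z)
      obtain ⟨f, hf, g, hg, hΛ, rfl⟩ := hv
      set u₁ := ‖(fun n => γ n (f n)) - Δ (fun m n => lam m (f n))‖ with hu₁
      set u₂ := ‖(fun n => γ n (g n)) - Δ (fun m n => lam m (g n))‖ with hu₂
      have hΔ : Δ (fun m n => lam m (f n)) = Δ (fun m n => lam m (g n)) := by rw [hΛ]
      have hb1 : |γ k₀ (f k₀) - Δ (fun m n => lam m (f n)) k₀| ≤ u₁ := by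
        have := norm_le_pi_norm
          ((fun n => γ n (f n)) - Δ (fun m n => lam m (f n))) k₀
        simpa [Real.norm_eq_abs] using this
      have hb2 : |γ k₀ (g k₀) - Δ (fun m n => lam m (g n)) k₀| ≤ u₂ := by
        have := norm_le_pi_norm
          ((fun n => γ n (g n)) - Δ (fun m n => lam m (g n))) k₀
        simpa [Real.norm_eq_abs] using this
      have he : γ k₀ (f k₀) - γ k₀ (g k₀)
          = (γ k₀ (f k₀) - Δ (fun m n => lam m (f n)) k₀)
            - (γ k₀ (g k₀) - Δ (fun m n => lam m (g n)) k₀) := by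
        rw [hΔ]; ring
      have l1 := le_abs_self (γ k₀ (f k₀) - Δ (fun m n => lam m (f n)) k₀)
      have l2 := neg_abs_le (γ k₀ (g k₀) - Δ (fun m n => lam m (g n)) k₀)
      have hzu : z < u₁ ∨ z < u₂ := by
        by_contra hcon
        push_neg at hcon
        linarith [hcon.1, hcon.2]
      rcases hzu with h | h
      · calc ((z:ℝ) : EReal) < ((u₁ : ℝ) : EReal) := by exact_mod_cast h
          _ ≤ _ := le_iSup₂ (f := fun f (_ : f ∈ Kdep) =>
            ((‖(fun n => γ n (f n)) - Δ (fun m n => lam m (f n))‖ : ℝ) : EReal)) f hf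
      · calc ((z:ℝ) : EReal) < ((u₂ : ℝ) : EReal) := by exact_mod_cast h
          _ ≤ _ := le_iSup₂ (f := fun f (_ : f ∈ Kdep) =>
            ((‖(fun n => γ n (f n)) - Δ (fun m n => lam m (f n))‖ : ℝ) : EReal)) g hg
    rw [htop]
    exact le_top
end

section
/- Let F be a real vector space, K ⊆ F a nonempty convex set, λ_1, …, λ_M ∈ F* linear functionals with λ(f) := (λ_1(f), …, λ_M(f)) ∈ ℝ^M, and Γ ∈ F* a linear functional. Then there exist c ∈ ℝ^M and d ∈ ℝ such that for every map Δ : ℝ^M → ℝ: sup_{f ∈ K} | Γ(f) − ( Σ_{m=1}^M c_m λ_m(f) + d ) | ≤ sup_{f ∈ K} | Γ(f) − Δ(λ(f)) | (suprema taken in the extended reals). In other words, when the quantity of interest is a linear functional and the model set is convex, an affine recovery map is genuinely optimal. -/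
open scoped BigOperators

set_option maxHeartbeats 2000000 in
/-- Part (i-b) of the appendix proposition: for a convex model set and a linear-functional
quantity of interest, an affine recovery map is genuinely optimal. -/
theorem stmt_13 {F : Type*} [AddCommGroup F] [Module ℝ F] {M : ℕ}
    (K : Set F) (hK : Convex ℝ K) (hne : K.Nonempty)
    (lam : Fin M → F →ₗ[ℝ] ℝ) (Γ : F →ₗ[ℝ] ℝ) :
    ∃ (c : Fin M → ℝ) (d : ℝ),
      ∀ Δ : (Fin M → ℝ) → ℝ,
        (⨆ f ∈ K, ((|Γ f - (∑ m, c m * lam m f + d)| : ℝ) : EReal)) ≤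
          ⨆ f ∈ K, ((|Γ f - Δ (fun m => lam m f)| : ℝ) : EReal) := by
  classical
  obtain ⟨f₀, hf₀⟩ := hne
  set v : F → Fin M → ℝ := fun f m => lam m f with hv
  set S : Set ℝ := {z | ∃ f ∈ K, ∃ g ∈ K, v f = v g ∧ z = Γ f - Γ g} with hS
  have hSne : S.Nonempty := ⟨0, f₀, hf₀, f₀, hf₀, rfl, (sub_self _).symm⟩
  -- lower bound for the error of an arbitrary recovery map
  have hlow : ∀ Δ : (Fin M → ℝ) → ℝ, ∀ z ∈ S,
      ((z / 2 : ℝ) : EReal) ≤ ⨆ f ∈ K, ((|Γ f - Δ (fun m => lam m f)| : ℝ) : EReal) := by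
    rintro Δ z ⟨f, hf, g, hg, hfg, rfl⟩
    have h1 : ((|Γ f - Δ (fun m => lam m f)| : ℝ) : EReal) ≤
        ⨆ f ∈ K, ((|Γ f - Δ (fun m => lam m f)| : ℝ) : EReal) :=
      le_iSup₂ (f := fun f (_ : f ∈ K) => ((|Γ f - Δ (fun m => lam m f)| : ℝ) : EReal)) f hf
    have h2 : ((|Γ g - Δ (fun m => lam m f)| : ℝ) : EReal) ≤
        ⨆ f ∈ K, ((|Γ f - Δ (fun m => lam m f)| : ℝ) : EReal) := by
      have h2' : ((|Γ g - Δ (fun m => lam m g)| : ℝ) : EReal) ≤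
          ⨆ f ∈ K, ((|Γ f - Δ (fun m => lam m f)| : ℝ) : EReal) :=
        le_iSup₂ (f := fun f (_ : f ∈ K) => ((|Γ f - Δ (fun m => lam m f)| : ℝ) : EReal)) g hg
      have : (fun m => lam m f) = fun m => lam m g := hfg
      rw [this]
      exact h2'
    rcases le_total |Γ f - Δ (fun m => lam m f)| |Γ g - Δ (fun m => lam m f)| with h | h
    · refine le_trans (EReal.coe_le_coe_iff.2 ?_) h2
      have ha := le_abs_self (Γ f - Δ (fun m => lam m f))
      have hb := neg_abs_le (Γ g - Δ (fun m => lam m f))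
      linarith
    · refine le_trans (EReal.coe_le_coe_iff.2 ?_) h1
      have ha := le_abs_self (Γ f - Δ (fun m => lam m f))
      have hb := neg_abs_le (Γ g - Δ (fun m => lam m f))
      linarith
  by_cases hbdd : BddAbove S
  swap
  · refine ⟨0, 0, fun Δ => ?_⟩
    have htop : (⨆ f ∈ K, ((|Γ f - Δ (fun m => lam m f)| : ℝ) : EReal)) = ⊤ := by
      rw [EReal.eq_top_iff_forall_lt]
      intro y
      obtain ⟨z, hz, hyz⟩ := not_bddAbove_iff.1 hbdd (2 * y)
      exact lt_of_lt_of_le (EReal.coe_lt_coe_iff.2 (by linarith)) (hlow Δ z hz)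
    rw [htop]; exact le_top
  -- bounded case
  set r : ℝ := sSup S with hr
  have hrle : ∀ f ∈ K, ∀ g ∈ K, v f = v g → Γ f - Γ g ≤ r :=
    fun f hf g hg h => le_csSup hbdd ⟨f, hf, g, hg, h, rfl⟩
  have hr0 : 0 ≤ r := le_csSup hbdd ⟨f₀, hf₀, f₀, hf₀, rfl, (sub_self _).symm⟩
  -- convex combinations of pairs
  have hcomb : ∀ s₁ s₂ : ℝ, 0 < s₁ → 0 < s₂ → ∀ f₁ ∈ K, ∀ g₁ ∈ K, ∀ f₂ ∈ K, ∀ g₂ ∈ K,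
      ∃ f ∈ K, ∃ g ∈ K, (s₁ + s₂) • (v f - v g) = s₁ • (v f₁ - v g₁) + s₂ • (v f₂ - v g₂) ∧
        (s₁ + s₂) * (Γ f - Γ g - r) = s₁ * (Γ f₁ - Γ g₁ - r) + s₂ * (Γ f₂ - Γ g₂ - r) := by
    intro s₁ s₂ h₁ h₂ f₁ hf₁ g₁ hg₁ f₂ hf₂ g₂ hg₂
    have hs : 0 < s₁ + s₂ := by linarith
    have ha : 0 ≤ s₁ / (s₁ + s₂) := by positivity
    have hb : 0 ≤ s₂ / (s₁ + s₂) := by positivity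
    have hab : s₁ / (s₁ + s₂) + s₂ / (s₁ + s₂) = 1 := by field_simp
    refine ⟨_, hK hf₁ hf₂ ha hb hab, _, hK hg₁ hg₂ ha hb hab, ?_, ?_⟩
    · funext m
      simp only [hv, Pi.smul_apply, Pi.add_apply, Pi.sub_apply, map_add, map_smul,
        smul_eq_mul]
      field_simp
      ring
    · simp only [map_add, map_smul, smul_eq_mul]
      field_simp
      ring
  -- the subspace of representable directions
  set W : Submodule ℝ (Fin M → ℝ) :=
    { carrier := {y | ∃ s : ℝ, 0 < s ∧ ∃ f ∈ K, ∃ g ∈ K, s • (v f - v g) = y}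
      zero_mem' := ⟨1, one_pos, f₀, hf₀, f₀, hf₀, by simp⟩
      add_mem' := by
        rintro y₁ y₂ ⟨s₁, h₁, f₁, hf₁, g₁, hg₁, rfl⟩ ⟨s₂, h₂, f₂, hf₂, g₂, hg₂, rfl⟩
        obtain ⟨f, hf, g, hg, hveq, -⟩ := hcomb s₁ s₂ h₁ h₂ f₁ hf₁ g₁ hg₁ f₂ hf₂ g₂ hg₂
        exact ⟨s₁ + s₂, by linarith, f, hf, g, hg, hveq⟩
      smul_mem' := by
        rintro c y ⟨s, hs, f, hf, g, hg, rfl⟩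
        rcases lt_trichotomy c 0 with hc | hc | hc
        · refine ⟨(-c) * s, by nlinarith, g, hg, f, hf, ?_⟩
          funext m
          simp only [Pi.smul_apply, Pi.sub_apply, smul_eq_mul]
          ring
        · refine ⟨1, one_pos, f₀, hf₀, f₀, hf₀, ?_⟩
          funext m
          simp [hc]
        · refine ⟨c * s, mul_pos hc hs, f, hf, g, hg, ?_⟩
          funext m
          simp only [Pi.smul_apply, Pi.sub_apply, smul_eq_mul]
          ring } with hW
  -- the sets whose suprema define the superlinear minorant
  set A : (Fin M → ℝ) → Set ℝ := fun y =>
    {z | ∃ s : ℝ, 0 < s ∧ ∃ f ∈ K, ∃ g ∈ K, s • (v f - v g) = y ∧ z = s * (Γ f - Γ g - r)}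
    with hA
  set q : (Fin M → ℝ) → ℝ := fun y => sSup (A y) with hq
  have hAne : ∀ y ∈ W, (A y).Nonempty := by
    rintro y ⟨s, hs, f, hf, g, hg, heq⟩
    exact ⟨s * (Γ f - Γ g - r), s, hs, f, hf, g, hg, heq, rfl⟩
  have hAbdd : ∀ y ∈ W, BddAbove (A y) := by
    rintro y ⟨s₀, hs₀, p₀, hp₀, q₀, hq₀, heq₀⟩
    refine ⟨s₀ * (Γ p₀ - Γ q₀ + r), ?_⟩
    rintro z ⟨s, hs, f, hf, g, hg, heq, rfl⟩
    have hs' : 0 < s + s₀ := by linarith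
    have ha : 0 ≤ s / (s + s₀) := by positivity
    have hb : 0 ≤ s₀ / (s + s₀) := by positivity
    have hab : s / (s + s₀) + s₀ / (s + s₀) = 1 := by field_simp
    have hu : (s / (s + s₀)) • f + (s₀ / (s + s₀)) • q₀ ∈ K := hK hf hq₀ ha hb hab
    have hw : (s / (s + s₀)) • g + (s₀ / (s + s₀)) • p₀ ∈ K := hK hg hp₀ ha hb hab
    have hveq : v ((s / (s + s₀)) • f + (s₀ / (s + s₀)) • q₀) =
        v ((s / (s + s₀)) • g + (s₀ / (s + s₀)) • p₀) := by
      funext m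
      have h1 := congrFun heq m
      have h2 := congrFun heq₀ m
      simp only [hv, Pi.smul_apply, Pi.sub_apply, smul_eq_mul] at h1 h2
      simp only [hv, map_add, map_smul, smul_eq_mul]
      field_simp
      linarith
    have hΓ := hrle _ hu _ hw hveq
    simp only [map_add, map_smul, smul_eq_mul] at hΓ
    have hrw : (s * Γ f + s₀ * Γ q₀ - (s * Γ g + s₀ * Γ p₀)) / (s + s₀) =
        s / (s + s₀) * Γ f + s₀ / (s + s₀) * Γ q₀ -
          (s / (s + s₀) * Γ g + s₀ / (s + s₀) * Γ p₀) := by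
      field_simp
    rw [← hrw, div_le_iff₀ hs'] at hΓ
    linarith
  have hAsmul : ∀ c : ℝ, 0 < c → ∀ y : Fin M → ℝ, ∀ z ∈ A y, c * z ∈ A (c • y) := by
    rintro c hc y z ⟨s, hs, f, hf, g, hg, heq, rfl⟩
    exact ⟨c * s, mul_pos hc hs, f, hf, g, hg, by rw [← heq, smul_smul], by ring⟩
  have hqsmul : ∀ c : ℝ, 0 < c → ∀ y ∈ W, q (c • y) = c * q y := by
    intro c hc y hy
    have hcy : c • y ∈ W := W.smul_mem c hy
    apply le_antisymm
    · refine csSup_le (hAne _ hcy) ?_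
      intro z hz
      have h1 : c⁻¹ * z ∈ A y := by
        have h := hAsmul c⁻¹ (by positivity) (c • y) z hz
        rwa [smul_smul, inv_mul_cancel₀ hc.ne', one_smul] at h
      have h2 : c⁻¹ * z ≤ q y := le_csSup (hAbdd y hy) h1
      have : c * (c⁻¹ * z) ≤ c * q y := mul_le_mul_of_nonneg_left h2 hc.le
      rwa [← mul_assoc, mul_inv_cancel₀ hc.ne', one_mul] at this
    · have h1 : q y ≤ c⁻¹ * q (c • y) := by
        refine csSup_le (hAne _ hy) ?_
        intro z hz
        have h2 : c * z ≤ q (c • y) := le_csSup (hAbdd _ hcy) (hAsmul c hc y z hz)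
        have : c⁻¹ * (c * z) ≤ c⁻¹ * q (c • y) :=
          mul_le_mul_of_nonneg_left h2 (by positivity)
        rwa [← mul_assoc, inv_mul_cancel₀ hc.ne', one_mul] at this
      have : c * q y ≤ c * (c⁻¹ * q (c • y)) := mul_le_mul_of_nonneg_left h1 hc.le
      rwa [← mul_assoc, mul_inv_cancel₀ hc.ne', one_mul] at this
  have hqadd : ∀ y₁ ∈ W, ∀ y₂ ∈ W, q y₁ + q y₂ ≤ q (y₁ + y₂) := by
    intro y₁ hy₁ y₂ hy₂
    have h12 : y₁ + y₂ ∈ W := W.add_mem hy₁ hy₂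
    have hz : ∀ z₁ ∈ A y₁, ∀ z₂ ∈ A y₂, z₁ + z₂ ∈ A (y₁ + y₂) := by
      rintro z₁ ⟨s₁, h₁, f₁, hf₁, g₁, hg₁, he₁, rfl⟩ z₂ ⟨s₂, h₂, f₂, hf₂, g₂, hg₂, he₂, rfl⟩
      obtain ⟨f, hf, g, hg, hveq, hΓeq⟩ := hcomb s₁ s₂ h₁ h₂ f₁ hf₁ g₁ hg₁ f₂ hf₂ g₂ hg₂
      exact ⟨s₁ + s₂, by linarith, f, hf, g, hg, by rw [hveq, he₁, he₂], hΓeq.symm⟩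
    have step1 : ∀ z₁ ∈ A y₁, z₁ + q y₂ ≤ q (y₁ + y₂) := by
      intro z₁ h₁
      have h : q y₂ ≤ q (y₁ + y₂) - z₁ := by
        refine csSup_le (hAne _ hy₂) ?_
        intro z₂ h₂
        have := le_csSup (hAbdd _ h12) (hz _ h₁ _ h₂)
        linarith
      linarith
    have h : q y₁ ≤ q (y₁ + y₂) - q y₂ := by
      refine csSup_le (hAne _ hy₁) ?_
      intro z₁ h₁
      have := step1 z₁ h₁
      linarith
    linarith
  have hq0 : q 0 ≤ 0 := by
    refine csSup_le (hAne 0 W.zero_mem) ?_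
    rintro z ⟨s, hs, f, hf, g, hg, heq, rfl⟩
    have hsub : v f - v g = 0 := by
      rcases smul_eq_zero.1 heq with h | h
      · exact absurd h hs.ne'
      · exact h
    have hveq : v f = v g := sub_eq_zero.1 hsub
    have := hrle f hf g hg hveq
    nlinarith
  -- the sublinear majorant on W and Hahn–Banach
  set N : ↥W → ℝ := fun y => - q (-(y : Fin M → ℝ)) with hN
  have hNhom : ∀ c : ℝ, 0 < c → ∀ x : ↥W, N (c • x) = c * N x := by
    intro c hc x
    have hco : (-(↑(c • x) : Fin M → ℝ)) = c • (-(x : Fin M → ℝ)) := by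
      simp [smul_neg]
    simp only [hN, hco, hqsmul c hc _ (W.neg_mem x.2)]
    ring
  have hNadd : ∀ x y : ↥W, N (x + y) ≤ N x + N y := by
    intro x y
    have h := hqadd _ (W.neg_mem x.2) _ (W.neg_mem y.2)
    have hco : (-(↑(x + y) : Fin M → ℝ)) = -(x : Fin M → ℝ) + -(y : Fin M → ℝ) := by
      simp
      abel
    simp only [hN, hco]
    linarith
  obtain ⟨L₀, -, hL₀⟩ :=
    exists_extension_of_le_sublinear ((0 : ↥W →ₗ[ℝ] ℝ).toPMap ⊥) N hNhom hNadd (by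
      intro x
      have hx0 : (x : ↥W) = 0 := (Submodule.mem_bot ℝ).1 x.2
      erw [LinearMap.toPMap_apply, hx0]
      simp only [hN, LinearMap.zero_apply]
      have : -(((0 : ↥W) : Fin M → ℝ)) = (0 : Fin M → ℝ) := by simp
      rw [this]
      linarith)
  have hkey : ∀ y : Fin M → ℝ, ∀ hy : y ∈ W, q y ≤ L₀ ⟨y, hy⟩ := by
    intro y hy
    have h1 := hL₀ (-⟨y, hy⟩)
    rw [map_neg] at h1
    have h2 : N (-⟨y, hy⟩) = - q y := by
      simp only [hN]
      congr 1
      congr 1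
      simp
    rw [h2] at h1
    linarith
  obtain ⟨L, hL⟩ := LinearMap.exists_extend L₀
  have hLW : ∀ (y : Fin M → ℝ) (hy : y ∈ W), L y = L₀ ⟨y, hy⟩ :=
    fun y hy => LinearMap.congr_fun hL ⟨y, hy⟩
  have hmain : ∀ f ∈ K, ∀ g ∈ K, Γ f - Γ g - r ≤ L (v f) - L (v g) := by
    intro f hf g hg
    have hyW : v f - v g ∈ W := ⟨1, one_pos, f, hf, g, hg, one_smul _ _⟩
    have hmem : Γ f - Γ g - r ∈ A (v f - v g) :=
      ⟨1, one_pos, f, hf, g, hg, one_smul _ _, (one_mul _).symm⟩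
    have h1 : Γ f - Γ g - r ≤ q (v f - v g) := le_csSup (hAbdd _ hyW) hmem
    have h2 : q (v f - v g) ≤ L₀ ⟨_, hyW⟩ := hkey _ hyW
    have h3 : L (v f - v g) = L₀ ⟨_, hyW⟩ := hLW _ hyW
    rw [← h3, map_sub] at h2
    linarith
  -- the constant term
  set D : Set ℝ := {z | ∃ f ∈ K, z = Γ f - L (v f)} with hD
  have hDne : D.Nonempty := ⟨_, f₀, hf₀, rfl⟩
  have hDbdd : BddAbove D := by
    refine ⟨Γ f₀ - L (v f₀) + r, ?_⟩
    rintro z ⟨f, hf, rfl⟩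
    have := hmain f hf f₀ hf₀
    linarith
  set d : ℝ := sSup D - r / 2 with hd
  have hub : ∀ f ∈ K, Γ f - L (v f) ≤ sSup D := fun f hf => le_csSup hDbdd ⟨f, hf, rfl⟩
  have hlb : ∀ f ∈ K, sSup D ≤ Γ f - L (v f) + r := by
    intro f hf
    refine csSup_le hDne ?_
    rintro z ⟨g, hg, rfl⟩
    have := hmain g hg f hf
    linarith
  have hfinal : ∀ f ∈ K, |Γ f - (L (v f) + d)| ≤ r / 2 := by
    intro f hf
    have h1 := hub f hf
    have h2 := hlb f hf
    rw [abs_le]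
    constructor <;> [linarith [hd]; linarith [hd]]
  refine ⟨fun m => L (fun j => if m = j then 1 else 0), d, ?_⟩
  intro Δ
  have hsum : ∀ f : F,
      (∑ m, (fun m => L (fun j => if m = j then 1 else 0)) m * lam m f) = L (v f) := by
    intro f
    rw [LinearMap.pi_apply_eq_sum_univ L (v f)]
    refine Finset.sum_congr rfl fun m _ => ?_
    simp only [hv, smul_eq_mul]
    ring
  have hle : (⨆ f ∈ K, ((|Γ f -
      ((∑ m, (fun m => L (fun j => if m = j then 1 else 0)) m * lam m f) + d)| : ℝ) : EReal)) ≤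
      ((r / 2 : ℝ) : EReal) := by
    refine iSup₂_le fun f hf => ?_
    rw [hsum f]
    exact EReal.coe_le_coe_iff.2 (hfinal f hf)
  refine hle.trans ?_
  by_cases hTtop : (⨆ f ∈ K, ((|Γ f - Δ (fun m => lam m f)| : ℝ) : EReal)) = ⊤
  · rw [hTtop]; exact le_top
  · have hTbot : (⨆ f ∈ K, ((|Γ f - Δ (fun m => lam m f)| : ℝ) : EReal)) ≠ ⊥ := by
      intro h
      have h1 : ((|Γ f₀ - Δ (fun m => lam m f₀)| : ℝ) : EReal) ≤
          ⨆ f ∈ K, ((|Γ f - Δ (fun m => lam m f)| : ℝ) : EReal) :=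
        le_iSup₂ (f := fun f (_ : f ∈ K) => ((|Γ f - Δ (fun m => lam m f)| : ℝ) : EReal)) f₀ hf₀
      rw [h] at h1
      exact absurd h1 (not_le.2 (EReal.bot_lt_coe _))
    obtain ⟨t, ht⟩ : ∃ t : ℝ,
        (⨆ f ∈ K, ((|Γ f - Δ (fun m => lam m f)| : ℝ) : EReal)) = (t : EReal) := by
      lift (⨆ f ∈ K, ((|Γ f - Δ (fun m => lam m f)| : ℝ) : EReal)) to ℝ using
        ⟨hTtop, hTbot⟩ with t ht
      exact ⟨t, rfl⟩
    rw [ht]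
    refine EReal.coe_le_coe_iff.2 ?_
    have h2t : ∀ z ∈ S, z ≤ 2 * t := by
      intro z hz
      have h := hlow Δ z hz
      rw [ht] at h
      have := EReal.coe_le_coe_iff.1 h
      linarith
    have hrt : r ≤ 2 * t := csSup_le hSne h2t
    linarith
end

section
/- Let F be a real vector space, K ⊆ F a nonempty convex set that is symmetric about the origin (f ∈ K implies −f ∈ K), λ_1, …, λ_M ∈ F* linear functionals with λ(f) := (λ_1(f), …, λ_M(f)) ∈ ℝ^M, and Γ ∈ F* a linear functional. Then there exists c ∈ ℝ^M such that for every map Δ : ℝ^M → ℝ: sup_{f ∈ K} | Γ(f) − Σ_{m=1}^M c_m λ_m(f) | ≤ sup_{f ∈ K} | Γ(f) − Δ(λ(f)) | (suprema taken in the extended reals). In other words, for a convex symmetric model set and a linear-functional quantity of interest, a linear recovery map is optimal. -/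
open scoped BigOperators


set_option maxHeartbeats 1000000 in
theorem smolyak_aux {F : Type*} [AddCommGroup F] [Module ℝ F] {M : ℕ}
    (K : Set F) (hK : Convex ℝ K) (h0 : (0 : F) ∈ K)
    (hsym : ∀ f ∈ K, -f ∈ K)
    (lam : Fin M → F →ₗ[ℝ] ℝ) (Γ : F →ₗ[ℝ] ℝ) (r : ℝ)
    (hr : ∀ f ∈ K, (∀ m, lam m f = 0) → Γ f ≤ r) :
    ∃ c : Fin M → ℝ, ∀ f ∈ K, |Γ f - ∑ m, c m * lam m f| ≤ r := by
  classical
  set lamv : F →ₗ[ℝ] (Fin M → ℝ) := LinearMap.pi lam with hlamv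
  have hr' : ∀ f ∈ K, lamv f = 0 → Γ f ≤ r := by
    intro f hf hf0
    exact hr f hf fun m => congrFun hf0 m
  have hr0 : (0 : ℝ) ≤ r := by simpa using hr' 0 h0 (by simp)
  -- The cone generated by `lamv '' K`, as a submodule.
  obtain ⟨C, hmemC⟩ : ∃ C : Submodule ℝ (Fin M → ℝ),
      ∀ y, y ∈ C ↔ ∃ f ∈ K, ∃ t : ℝ, 0 ≤ t ∧ y = t • lamv f := by
    refine ⟨{
      carrier := {y | ∃ f ∈ K, ∃ t : ℝ, 0 ≤ t ∧ y = t • lamv f}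
      zero_mem' := ⟨0, h0, 0, le_refl 0, by simp⟩
      add_mem' := by
        rintro y₁ y₂ ⟨f₁, hf₁, t₁, ht₁, rfl⟩ ⟨f₂, hf₂, t₂, ht₂, rfl⟩
        rcases eq_or_lt_of_le (add_nonneg ht₁ ht₂) with h | h
        · have h1 : t₁ = 0 := by linarith
          have h2 : t₂ = 0 := by linarith
          exact ⟨0, h0, 0, le_refl 0, by simp [h1, h2]⟩
        · refine ⟨(t₁ / (t₁ + t₂)) • f₁ + (t₂ / (t₁ + t₂)) • f₂,
            hK hf₁ hf₂ (by positivity) (by positivity) (by field_simp), t₁ + t₂, le_of_lt h, ?_⟩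
          have hne : t₁ + t₂ ≠ 0 := ne_of_gt h
          simp only [map_add, map_smul, smul_add, smul_smul]
          rw [mul_div_cancel₀ _ hne, mul_div_cancel₀ _ hne]
      smul_mem' := by
        rintro c y ⟨f, hf, t, ht, rfl⟩
        rcases le_or_gt 0 c with hc | hc
        · exact ⟨f, hf, c * t, mul_nonneg hc ht, by rw [smul_smul]⟩
        · refine ⟨-f, hsym f hf, -(c * t), by nlinarith, ?_⟩
          rw [map_neg, smul_neg, neg_smul, neg_neg, smul_smul] }, fun y => Iff.rfl⟩
  -- the fiber-wise value sets
  set E : (Fin M → ℝ) → Set ℝ :=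
    fun y => {z | ∃ f ∈ K, ∃ t : ℝ, 0 < t ∧ lamv f = t • y ∧ z = (Γ f - r) / t} with hE
  -- upper bound on E y for y ∈ C
  have hEbd : ∀ (f₀ : F), f₀ ∈ K → ∀ (t₀ : ℝ), 0 ≤ t₀ → ∀ z ∈ E (t₀ • lamv f₀),
      z ≤ t₀ * (r + Γ f₀) := by
    rintro f₀ hf₀ t₀ ht₀ z ⟨f, hf, t, ht, hft, rfl⟩
    rcases eq_or_lt_of_le ht₀ with h | h
    · -- t₀ = 0 : then lamv f = 0
      have h0' : lamv f = 0 := by rw [hft, ← h]; simp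
      have := hr' f hf h0'
      rw [← h, zero_mul]
      exact div_nonpos_of_nonpos_of_nonneg (by linarith) ht.le
    · -- t₀ > 0
      set s : ℝ := t * t₀ with hs
      have hspos : 0 < s := mul_pos ht h
      have hgK : (1 / (1 + s)) • f + (s / (1 + s)) • (-f₀) ∈ K := by
        refine hK hf (hsym f₀ hf₀) (by positivity) (by positivity) (by field_simp)
      have hlam0 : lamv ((1 / (1 + s)) • f + (s / (1 + s)) • (-f₀)) = 0 := by
        have : lamv f = s • lamv f₀ := by
          rw [hft, smul_smul]
        simp only [map_add, map_smul, map_neg, this, smul_smul, smul_neg]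
        rw [← sub_eq_add_neg, ← sub_smul]
        have : 1 / (1 + s) * s - s / (1 + s) = 0 := by field_simp; ring
        rw [this, zero_smul]
      have hΓ := hr' _ hgK hlam0
      simp only [map_add, map_smul, map_neg, smul_eq_mul] at hΓ
      -- (1/(1+s)) Γ f - (s/(1+s)) Γ f₀ ≤ r
      have h1s : (0:ℝ) < 1 + s := by linarith
      have hΓf : Γ f ≤ r + s * (r + Γ f₀) := by
        rw [div_mul_eq_mul_div, div_mul_eq_mul_div, ← add_div,
          div_le_iff₀ h1s] at hΓ
        nlinarith [hΓ]
      rw [div_le_iff₀ ht]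
      calc Γ f - r ≤ s * (r + Γ f₀) := by linarith
        _ = t₀ * (r + Γ f₀) * t := by ring
  have hEbdd : ∀ y ∈ C, BddAbove (E y) := by
    intro y hy
    obtain ⟨f₀, hf₀, t₀, ht₀, rfl⟩ := (hmemC y).mp hy
    exact ⟨t₀ * (r + Γ f₀), fun z hz => hEbd f₀ hf₀ t₀ ht₀ z hz⟩
  have hEne : ∀ y ∈ C, (E y).Nonempty := by
    intro y hy
    obtain ⟨f₀, hf₀, t₀, ht₀, rfl⟩ := (hmemC y).mp hy
    rcases eq_or_lt_of_le ht₀ with h | h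
    · exact ⟨(Γ 0 - r) / 1, 0, h0, 1, one_pos, by simp [← h], rfl⟩
    · exact ⟨(Γ f₀ - r) / (1 / t₀), f₀, hf₀, 1 / t₀, by positivity,
        by rw [smul_smul]; field_simp; rw [one_smul], rfl⟩
  set p : (Fin M → ℝ) → ℝ := fun y => sSup (E y) with hp
  -- p y ≥ Γ f - r for y = lamv f
  have hplow : ∀ f ∈ K, Γ f - r ≤ p (lamv f) := by
    intro f hf
    have hmem : lamv f ∈ C := (hmemC _).mpr ⟨f, hf, 1, one_pos.le, (one_smul _ _).symm⟩
    have : (Γ f - r) / 1 ∈ E (lamv f) := ⟨f, hf, 1, one_pos, (one_smul _ _).symm, rfl⟩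
    simpa using le_csSup (hEbdd _ hmem) this
  have hp0 : p 0 ≤ 0 := by
    apply csSup_le (hEne 0 (zero_mem C))
    rintro z ⟨f, hf, t, ht, hft, rfl⟩
    have : lamv f = 0 := by rw [hft]; simp
    exact div_nonpos_of_nonpos_of_nonneg (by linarith [hr' f hf this]) ht.le
  -- superadditivity on C
  have hpadd : ∀ y₁ ∈ C, ∀ y₂ ∈ C, p y₁ + p y₂ ≤ p (y₁ + y₂) := by
    intro y₁ hy₁ y₂ hy₂
    have hkey : ∀ z₁ ∈ E y₁, ∀ z₂ ∈ E y₂, z₁ + z₂ ∈ E (y₁ + y₂) := by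
      rintro z₁ ⟨f₁, hf₁, t₁, ht₁, hft₁, rfl⟩ z₂ ⟨f₂, hf₂, t₂, ht₂, hft₂, rfl⟩
      have hts : (0:ℝ) < t₁ + t₂ := by linarith
      refine ⟨(t₂ / (t₁ + t₂)) • f₁ + (t₁ / (t₁ + t₂)) • f₂,
        hK hf₁ hf₂ (by positivity) (by positivity)
          (by rw [← add_div, add_comm, div_self hts.ne']), t₁ * t₂ / (t₁ + t₂),
        by positivity, ?_, ?_⟩
      · simp only [map_add, map_smul, hft₁, hft₂, smul_smul, smul_add]
        have e1 : t₂ / (t₁ + t₂) * t₁ = t₁ * t₂ / (t₁ + t₂) := by ring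
        have e2 : t₁ / (t₁ + t₂) * t₂ = t₁ * t₂ / (t₁ + t₂) := by ring
        rw [e1, e2]
      · simp only [map_add, map_smul, smul_eq_mul]
        field_simp
        ring
    have hbdd := hEbdd _ (add_mem hy₁ hy₂)
    -- sup + sup ≤ sup
    have h1 : ∀ z₁ ∈ E y₁, ∀ z₂ ∈ E y₂, z₁ + z₂ ≤ p (y₁ + y₂) := fun z₁ h₁ z₂ h₂ =>
      le_csSup hbdd (hkey z₁ h₁ z₂ h₂)
    have h2 : p y₁ ≤ p (y₁ + y₂) - p y₂ := by
      apply csSup_le (hEne _ hy₁)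
      intro z₁ hz₁
      rw [le_sub_iff_add_le]
      have : p y₂ ≤ p (y₁ + y₂) - z₁ := by
        apply csSup_le (hEne _ hy₂)
        intro z₂ hz₂
        linarith [h1 z₁ hz₁ z₂ hz₂]
      linarith
    linarith
  -- positive homogeneity on C
  have hphom_le : ∀ c : ℝ, 0 < c → ∀ y ∈ C, c * p y ≤ p (c • y) := by
    intro c hc y hy
    have hsmul : ∀ z ∈ E y, c * z ∈ E (c • y) := by
      rintro z ⟨f, hf, t, ht, hft, rfl⟩
      refine ⟨f, hf, t / c, by positivity, ?_, by field_simp⟩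
      rw [hft, smul_smul]
      congr 1
      field_simp
    rw [mul_comm, ← le_div_iff₀ hc]
    apply csSup_le (hEne _ hy)
    intro z hz
    rw [le_div_iff₀ hc, mul_comm]
    exact le_csSup (hEbdd _ (C.smul_mem c hy)) (hsmul z hz)
  have hphom : ∀ c : ℝ, 0 < c → ∀ y ∈ C, p (c • y) = c * p y := by
    intro c hc y hy
    refine le_antisymm ?_ (hphom_le c hc y hy)
    have := hphom_le c⁻¹ (by positivity) (c • y) (C.smul_mem c hy)
    rw [smul_smul, inv_mul_cancel₀ (ne_of_gt hc), one_smul] at this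
    calc p (c • y) = c * (c⁻¹ * p (c • y)) := by field_simp
      _ ≤ c * p y := by nlinarith
  -- Hahn-Banach on the subspace C
  set N : C → ℝ := fun x => -p (-(x : Fin M → ℝ)) with hN
  have hNhom : ∀ c : ℝ, 0 < c → ∀ x : C, N (c • x) = c * N x := by
    intro c hc x
    simp only [hN]
    have : -((c • x : C) : Fin M → ℝ) = c • (-(x : Fin M → ℝ)) := by
      simp
    rw [this, hphom c hc _ (C.neg_mem x.2)]
    ring
  have hNadd : ∀ x y : C, N (x + y) ≤ N x + N y := by
    intro x y
    simp only [hN]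
    have h := hpadd _ (C.neg_mem x.2) _ (C.neg_mem y.2)
    have : -((x + y : C) : Fin M → ℝ) = -(x : Fin M → ℝ) + -(y : Fin M → ℝ) := by
      push_cast; ring
    rw [this]
    linarith
  have hp0' : (0:ℝ) ≤ N 0 := by
    have h00 : -((0 : C) : Fin M → ℝ) = 0 := by simp
    simp only [hN, h00]
    linarith [hp0]
  have hf0 : ∀ x : ((⟨⊥, 0⟩ : C →ₗ.[ℝ] ℝ)).domain,
      ((⟨⊥, 0⟩ : C →ₗ.[ℝ] ℝ)) x ≤ N x := by
    rintro ⟨x, hx⟩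
    have hx0 : x = 0 := by simpa using hx
    simp only [LinearPMap.mk_apply, LinearMap.zero_apply, hx0]
    exact hp0'
  obtain ⟨g, -, hg⟩ := exists_extension_of_le_sublinear (⟨⊥, 0⟩ : C →ₗ.[ℝ] ℝ) N hNhom hNadd hf0
  -- g dominates p on C
  have hgp : ∀ x : C, p (x : Fin M → ℝ) ≤ g x := by
    intro x
    have := hg (-x)
    simp only [hN, map_neg] at this
    have hxx : -(((-x : C)) : Fin M → ℝ) = (x : Fin M → ℝ) := by push_cast; ring
    rw [hxx] at this
    linarith
  -- extend g to the whole space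
  obtain ⟨L, hL⟩ := LinearMap.exists_extend g
  have hLg : ∀ x : C, L (x : Fin M → ℝ) = g x := fun x => by
    have := congrFun (congrArg (fun h => h.toFun) hL) x
    simpa using this
  -- the coefficients
  refine ⟨fun m => L (Pi.single m 1), ?_⟩
  have hLsum : ∀ f : F, ∑ m, L (Pi.single m 1) * lam m f = L (lamv f) := by
    intro f
    have hrepr : lamv f = ∑ m, (lam m f) • (Pi.single m 1 : Fin M → ℝ) := by
      ext j
      simp [lamv, Pi.single_apply, Finset.sum_ite_eq, mul_comm]
    rw [hrepr, map_sum]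
    simp [mul_comm]
  -- the key one-sided bound
  have hone : ∀ f ∈ K, Γ f - L (lamv f) ≤ r := by
    intro f hf
    have hmem : lamv f ∈ C := (hmemC _).mpr ⟨f, hf, 1, one_pos.le, (one_smul _ _).symm⟩
    have h1 : p (lamv f) ≤ L (lamv f) := by
      have := hgp ⟨lamv f, hmem⟩
      rw [← hLg ⟨lamv f, hmem⟩] at this
      exact this
    linarith [hplow f hf]
  intro f hf
  rw [hLsum f]
  rw [abs_le]
  constructor
  · have := hone (-f) (hsym f hf)
    simp only [map_neg] at this
    linarith
  · linarith [hone f hf]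

/-- For a convex model set symmetric about the origin and a linear-functional quantity of
interest, a linear recovery map is genuinely optimal. -/
theorem stmt_14 {F : Type*} [AddCommGroup F] [Module ℝ F] {M : ℕ}
    (K : Set F) (hK : Convex ℝ K) (hne : K.Nonempty)
    (hsym : ∀ f ∈ K, -f ∈ K)
    (lam : Fin M → F →ₗ[ℝ] ℝ) (Γ : F →ₗ[ℝ] ℝ) :
    ∃ c : Fin M → ℝ,
      ∀ Δ : (Fin M → ℝ) → ℝ,
        (⨆ f ∈ K, ((|Γ f - ∑ m, c m * lam m f| : ℝ) : EReal)) ≤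
          ⨆ f ∈ K, ((|Γ f - Δ (fun m => lam m f)| : ℝ) : EReal) := by
  classical
  obtain ⟨f₁, hf₁⟩ := hne
  have h0 : (0 : F) ∈ K := by
    have h := hK hf₁ (hsym f₁ hf₁) (by norm_num : (0:ℝ) ≤ 1/2) (by norm_num : (0:ℝ) ≤ 1/2)
      (by norm_num)
    simpa [← sub_eq_add_neg, ← sub_smul] using h
  set S : Set ℝ := {x | ∃ f ∈ K, (∀ m, lam m f = 0) ∧ Γ f = x} with hS
  have hSne : S.Nonempty := ⟨0, 0, h0, by simp, by simp⟩
  -- every element of S is dominated by the worst-case error of any Δ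
  have hkey : ∀ (Δ : (Fin M → ℝ) → ℝ), ∀ x ∈ S,
      (x : EReal) ≤ ⨆ f ∈ K, ((|Γ f - Δ (fun m => lam m f)| : ℝ) : EReal) := by
    rintro Δ x ⟨f, hf, hf0, rfl⟩
    set d : ℝ := Δ (fun m => lam m f) with hd
    have e : (fun m => lam m (-f)) = (fun m => lam m f) := by
      funext m; simp [hf0 m]
    rcases le_total d 0 with hdle | hdle
    · have h1 : Γ f ≤ |Γ f - d| := le_trans (by linarith) (le_abs_self _)
      calc (Γ f : EReal) ≤ ((|Γ f - d| : ℝ) : EReal) := by exact_mod_cast h1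
        _ ≤ _ := le_iSup₂_of_le f hf (le_refl _)
    · have h1 : Γ f ≤ |Γ (-f) - d| := by
        rw [map_neg]
        calc Γ f ≤ Γ f + d := by linarith
          _ = -(-Γ f - d) := by ring
          _ ≤ |(-Γ f) - d| := neg_le_abs _
      calc (Γ f : EReal) ≤ ((|Γ (-f) - Δ (fun m => lam m (-f))| : ℝ) : EReal) := by
            rw [e, ← hd]; exact_mod_cast h1
        _ ≤ _ := le_iSup₂_of_le (-f) (hsym f hf) (le_refl _)
  by_cases hbdd : BddAbove S
  · -- bounded case: use the core lemma with r = sSup S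
    set r : ℝ := sSup S with hrdef
    have hr : ∀ f ∈ K, (∀ m, lam m f = 0) → Γ f ≤ r :=
      fun f hf h => le_csSup hbdd ⟨f, hf, h, rfl⟩
    obtain ⟨c, hc⟩ := smolyak_aux K hK h0 hsym lam Γ r hr
    refine ⟨c, fun Δ => ?_⟩
    set R : EReal := ⨆ f ∈ K, ((|Γ f - Δ (fun m => lam m f)| : ℝ) : EReal) with hR
    have hL : (⨆ f ∈ K, ((|Γ f - ∑ m, c m * lam m f| : ℝ) : EReal)) ≤ (r : EReal) := by
      refine iSup₂_le fun f hf => ?_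
      exact_mod_cast hc f hf
    refine hL.trans ?_
    by_cases hT : R = ⊤
    · rw [hT]; exact le_top
    · have hRlow : ((|Γ f₁ - Δ (fun m => lam m f₁)| : ℝ) : EReal) ≤ R :=
        le_iSup₂_of_le f₁ hf₁ (le_refl _)
      have hRbot : R ≠ ⊥ := fun h => by
        rw [h] at hRlow
        exact (EReal.coe_ne_bot _) (le_bot_iff.mp hRlow)
      have hRb : R = ((R.toReal : ℝ) : EReal) := (EReal.coe_toReal hT hRbot).symm
      have hb : ∀ x ∈ S, x ≤ R.toReal := by
        intro x hx
        have := hkey Δ x hx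
        rw [← hR, hRb] at this
        exact_mod_cast this
      have : r ≤ R.toReal := csSup_le hSne hb
      rw [hRb]
      exact_mod_cast this
  · -- unbounded case: every worst-case error is ⊤
    refine ⟨0, fun Δ => ?_⟩
    have hT : (⨆ f ∈ K, ((|Γ f - Δ (fun m => lam m f)| : ℝ) : EReal)) = ⊤ := by
      rw [EReal.eq_top_iff_forall_lt]
      intro y
      obtain ⟨x, hx, hy⟩ := (not_bddAbove_iff.mp hbdd) y
      exact lt_of_lt_of_le (by exact_mod_cast hy) (hkey Δ x hx)
    rw [hT]
    exact le_top
end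

section
/- Let F be a real vector space, K ⊆ F a convex set containing the origin, λ_1, …, λ_M ∈ F* linear functionals with λ(f) := (λ_1(f), …, λ_M(f)) ∈ ℝ^M, and Γ ∈ F* a linear functional. Then there exists c ∈ ℝ^M such that for every map Δ : ℝ^M → ℝ: sup_{f ∈ K} | Γ(f) − Σ_{m=1}^M c_m λ_m(f) | ≤ 2 · sup_{f ∈ K} | Γ(f) − Δ(λ(f)) | (suprema taken in the extended reals, with 2 · (+∞) = +∞). In other words, for a convex model set containing 0 and a linear-functional quantity of interest, a linear recovery map is near-optimal with factor 2. -/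
open scoped BigOperators

/-- A functional vanishing on the common kernel of finitely many functionals is a
linear combination of them. -/
lemma funct_factor {F : Type*} [AddCommGroup F] [Module ℝ F] {M : ℕ}
    (lam : Fin M → F →ₗ[ℝ] ℝ) (u : F →ₗ[ℝ] ℝ)
    (hu : ∀ f, (∀ m, lam m f = 0) → u f = 0) :
    ∃ c : Fin M → ℝ, ∀ f, u f = ∑ m, c m * lam m f := by
  set lv : F →ₗ[ℝ] (Fin M → ℝ) := LinearMap.pi lam with hlv
  have hker : LinearMap.ker lv ≤ LinearMap.ker u := by
    intro f hf
    rw [LinearMap.mem_ker] at hf ⊢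
    exact hu f fun m => congrFun hf m
  set ub : F ⧸ LinearMap.ker lv →ₗ[ℝ] ℝ := Submodule.liftQ _ u hker with hub
  obtain ⟨q, hq⟩ := (LinearMap.range lv).exists_isCompl
  set π := Submodule.linearProjOfIsCompl _ q hq with hπ
  set c' : (Fin M → ℝ) →ₗ[ℝ] ℝ :=
    (ub.comp (lv.quotKerEquivRange.symm.toLinearMap)).comp π with hc'def
  have hc' : ∀ f, c' (lv f) = u f := by
    intro f
    have h1 : π (lv f) = ⟨lv f, LinearMap.mem_range_self lv f⟩ :=
      Submodule.linearProjOfIsCompl_apply_left hq ⟨lv f, LinearMap.mem_range_self lv f⟩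
    show ub (lv.quotKerEquivRange.symm (π (lv f))) = u f
    rw [h1]
    have h2 : lv.quotKerEquivRange.symm ⟨lv f, LinearMap.mem_range_self lv f⟩
        = Submodule.Quotient.mk f := by
      rw [LinearEquiv.symm_apply_eq]
      exact Subtype.ext (lv.quotKerEquivRange_apply_mk f).symm
    rw [h2]
    exact Submodule.liftQ_apply _ u f
  refine ⟨fun m => c' fun j => if m = j then 1 else 0, fun f => ?_⟩
  have h3 := LinearMap.pi_apply_eq_sum_univ c' (lv f)
  rw [hc'] at h3
  rw [h3]
  refine Finset.sum_congr rfl fun m _ => ?_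
  have : lv f m = lam m f := rfl
  rw [this, smul_eq_mul, mul_comm]


set_option maxHeartbeats 1000000 in
lemma key_linear_recovery {F : Type*} [AddCommGroup F] [Module ℝ F] {M : ℕ}
    (K : Set F) (hK : Convex ℝ K) (h0 : (0 : F) ∈ K)
    (lam : Fin M → F →ₗ[ℝ] ℝ) (Γ : F →ₗ[ℝ] ℝ) (e : ℝ)
    (he : ∀ f1 ∈ K, ∀ f2 ∈ K, (∀ m, lam m f1 = lam m f2) → |Γ f1 - Γ f2| ≤ e) :
    ∃ c : Fin M → ℝ, ∀ f ∈ K, |Γ f - ∑ m, c m * lam m f| ≤ e := by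
  classical
  -- the symmetrized convex hull
  set B : Set F := convexHull ℝ (K ∪ -K) with hBdef
  have hBconv : Convex ℝ B := convex_convexHull ℝ _
  have hKB : K ⊆ B := (Set.subset_union_left).trans (subset_convexHull ℝ _)
  have hB0 : (0 : F) ∈ B := hKB h0
  have hBneg : ∀ b ∈ B, -b ∈ B := by
    intro b hb
    have : -(K ∪ -K) = K ∪ -K := by
      ext x; simp [Set.mem_neg, or_comm]
    rw [hBdef, ← this, convexHull_neg]
    exact Set.neg_mem_neg.mpr hb
  have he0 : 0 ≤ e := by
    have := he 0 h0 0 h0 (fun m => rfl)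
    simpa using this
  -- representation of elements of B
  have hBrep : ∀ b ∈ B, ∃ s t : ℝ, 0 ≤ s ∧ 0 ≤ t ∧ s + t = 1 ∧
      ∃ k1 ∈ K, ∃ k2 ∈ K, b = s • k1 - t • k2 := by
    intro b hb
    rw [hBdef, hK.convexHull_union hK.neg ⟨0, h0⟩ ⟨0, by simpa using h0⟩] at hb
    rw [mem_convexJoin] at hb
    obtain ⟨x, hx, y, hy, hseg⟩ := hb
    obtain ⟨s, t, hs, ht, hst, hb⟩ := hseg
    refine ⟨s, t, hs, ht, hst, x, hx, -y, hy, ?_⟩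
    rw [← hb]
    simp [sub_eq_add_neg]
  -- |Γ| ≤ e on B ∩ (common kernel)
  have hΓB : ∀ b ∈ B, (∀ m, lam m b = 0) → |Γ b| ≤ e := by
    intro b hb hker
    obtain ⟨s, t, hs, ht, hst, k1, hk1, k2, hk2, hrep⟩ := hBrep b hb
    have hf1 : s • k1 ∈ K := by
      have := hK h0 hk1 ht hs (by linarith)
      simpa using this
    have hf2 : t • k2 ∈ K := by
      have := hK h0 hk2 hs ht hst
      simpa using this
    have hmatch : ∀ m, lam m (s • k1) = lam m (t • k2) := by
      intro m
      have := hker m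
      rw [hrep] at this
      rw [map_sub] at this
      linarith
    have := he _ hf1 _ hf2 hmatch
    rw [hrep, map_sub]
    exact this
  -- scaled version
  have hΓcone : ∀ (h : F), (∀ m, lam m h = 0) → ∀ a : ℝ, 0 ≤ a → ∀ b ∈ B,
      h = a • b → |Γ h| ≤ a * e := by
    intro h hker a ha b hb hab
    rcases eq_or_lt_of_le ha with ha0 | hapos
    · subst hab; rw [← ha0]; simp
    · have hbker : ∀ m, lam m b = 0 := by
        intro m
        have h1 : lam m h = a * lam m b := by rw [hab, map_smul]; rfl
        have := hker m
        rw [h1] at this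
        exact (mul_eq_zero.mp this).resolve_left (ne_of_gt hapos)
      have := hΓB b hb hbker
      rw [hab, map_smul, smul_eq_mul, abs_mul, abs_of_pos hapos]
      exact mul_le_mul_of_nonneg_left this hapos.le
  -- span of K is contained in the cone over B
  have hspan : ∀ s ∈ Submodule.span ℝ K, ∃ a : ℝ, 0 ≤ a ∧ ∃ b ∈ B, s = a • b := by
    intro s hs
    induction hs using Submodule.span_induction with
    | mem x hx => exact ⟨1, zero_le_one, x, hKB hx, (one_smul ℝ x).symm⟩
    | zero => exact ⟨0, le_rfl, 0, hB0, by simp⟩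
    | add x y hx hy ihx ihy =>
        obtain ⟨a1, ha1, b1, hb1, rfl⟩ := ihx
        obtain ⟨a2, ha2, b2, hb2, rfl⟩ := ihy
        rcases eq_or_lt_of_le (add_nonneg ha1 ha2) with h12 | h12
        · have ha1' : a1 = 0 := by linarith [ha1, ha2]
          have ha2' : a2 = 0 := by linarith
          exact ⟨0, le_rfl, 0, hB0, by simp [ha1', ha2']⟩
        · refine ⟨a1 + a2, h12.le, (a1 / (a1 + a2)) • b1 + (a2 / (a1 + a2)) • b2,
            hBconv hb1 hb2 (div_nonneg ha1 h12.le) (div_nonneg ha2 h12.le)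
              (by field_simp), ?_⟩
          rw [smul_add, smul_smul, smul_smul]
          rw [mul_div_cancel₀ _ (ne_of_gt h12), mul_div_cancel₀ _ (ne_of_gt h12)]
    | smul r x hx ihx =>
        obtain ⟨a, ha, b, hb, rfl⟩ := ihx
        rcases le_or_gt 0 r with hr | hr
        · exact ⟨r * a, mul_nonneg hr ha, b, hb, smul_smul r a b⟩
        · refine ⟨(-r) * a, mul_nonneg (by linarith) ha, -b, hBneg b hb, ?_⟩
          rw [smul_smul, smul_neg, ← neg_smul]
          ring_nf
  -- combination of cone elements
  have hcomb : ∀ a1 : ℝ, 0 ≤ a1 → ∀ a2 : ℝ, 0 ≤ a2 → ∀ b1 ∈ B, ∀ b2 ∈ B,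
      ∃ b3 ∈ B, a1 • b1 + a2 • b2 = (a1 + a2) • b3 := by
    intro a1 ha1 a2 ha2 b1 hb1 b2 hb2
    rcases eq_or_lt_of_le (add_nonneg ha1 ha2) with h12 | h12
    · have ha1' : a1 = 0 := by linarith
      have ha2' : a2 = 0 := by linarith
      exact ⟨0, hB0, by simp [ha1', ha2']⟩
    · refine ⟨(a1 / (a1 + a2)) • b1 + (a2 / (a1 + a2)) • b2,
        hBconv hb1 hb2 (div_nonneg ha1 h12.le) (div_nonneg ha2 h12.le) (by field_simp), ?_⟩
      rw [smul_add, smul_smul, smul_smul]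
      rw [mul_div_cancel₀ _ (ne_of_gt h12), mul_div_cancel₀ _ (ne_of_gt h12)]
  -- the common kernel
  set N' : Submodule ℝ F := ⨅ m, LinearMap.ker (lam m) with hN'def
  have hmemN' : ∀ f : F, f ∈ N' ↔ ∀ m, lam m f = 0 := by
    intro f
    simp [hN'def, Submodule.mem_iInf, LinearMap.mem_ker]
  -- the working subspace
  set G : Submodule ℝ F := N' ⊔ Submodule.span ℝ K with hGdef
  have hdecomp : ∀ x : G, ∃ h ∈ N', ∃ a : ℝ, 0 ≤ a ∧ ∃ b ∈ B, (x : F) = h + a • b := by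
    intro x
    obtain ⟨h, hh, s, hs, hx⟩ := Submodule.mem_sup.mp x.2
    obtain ⟨a, ha, b, hb, rfl⟩ := hspan s hs
    exact ⟨h, hh, a, ha, b, hb, hx.symm⟩
  -- fundamental comparison between decompositions
  have hdiff : ∀ (h1 h2 : F), h1 ∈ N' → h2 ∈ N' →
      ∀ (a1 : ℝ), 0 ≤ a1 → ∀ (a2 : ℝ), 0 ≤ a2 → ∀ b1 ∈ B, ∀ b2 ∈ B,
      h1 + a1 • b1 = h2 + a2 • b2 → Γ h2 - a2 * e ≤ Γ h1 + a1 * e := by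
    intro h1 h2 hh1 hh2 a1 ha1 a2 ha2 b1 hb1 b2 hb2 heq
    obtain ⟨b3, hb3, hb3eq⟩ := hcomb a1 ha1 a2 ha2 b1 hb1 (-b2) (hBneg b2 hb2)
    have hkey : h2 - h1 = (a1 + a2) • b3 := by
      rw [← hb3eq, smul_neg]
      have h2eq : h2 = h1 + a1 • b1 - a2 • b2 := by
        have := congrArg (fun z => z - a2 • b2) heq
        simpa using this.symm
      rw [h2eq]; abel
    have hmem : h2 - h1 ∈ N' := sub_mem hh2 hh1
    have hbound := hΓcone (h2 - h1) (fun m => (hmemN' _).mp hmem m)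
      (a1 + a2) (by linarith) b3 hb3 hkey
    rw [map_sub] at hbound
    have := abs_le.mp hbound
    nlinarith [this.1, this.2]
  -- decomposition sets and the sublinear functional
  set Dset : G → Set ℝ := fun x =>
    {r | ∃ h ∈ N', ∃ a : ℝ, 0 ≤ a ∧ ∃ b ∈ B, (x : F) = h + a • b ∧ r = Γ h + a * e}
    with hDdef
  have hne : ∀ x : G, (Dset x).Nonempty := by
    intro x
    obtain ⟨h, hh, a, ha, b, hb, hx⟩ := hdecomp x
    exact ⟨Γ h + a * e, h, hh, a, ha, b, hb, hx, rfl⟩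
  have hlbaux : ∀ x : G, ∀ h1 ∈ N', ∀ a1 : ℝ, 0 ≤ a1 → ∀ b1 ∈ B, (x : F) = h1 + a1 • b1 →
      ∀ r ∈ Dset x, Γ h1 - a1 * e ≤ r := by
    intro x h1 hh1 a1 ha1 b1 hb1 hx r hr
    obtain ⟨h, hh, a, ha, b, hb, hx2, rfl⟩ := hr
    exact hdiff h h1 hh hh1 a ha a1 ha1 b hb b1 hb1 (by rw [← hx2, ← hx])
  have hbdd : ∀ x : G, BddBelow (Dset x) := by
    intro x
    obtain ⟨h, hh, a, ha, b, hb, hx⟩ := hdecomp x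
    exact ⟨Γ h - a * e, fun r hr => hlbaux x h hh a ha b hb hx r hr⟩
  set p : G → ℝ := fun x => sInf (Dset x) with hpdef
  have p_le : ∀ (x : G) (h : F), h ∈ N' → ∀ a : ℝ, 0 ≤ a → ∀ b ∈ B, (x : F) = h + a • b →
      p x ≤ Γ h + a * e := fun x h hh a ha b hb hx =>
    csInf_le (hbdd x) ⟨h, hh, a, ha, b, hb, hx, rfl⟩
  have le_p : ∀ (x : G) (r : ℝ), (∀ h ∈ N', ∀ a : ℝ, 0 ≤ a → ∀ b ∈ B, (x : F) = h + a • b →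
      r ≤ Γ h + a * e) → r ≤ p x := by
    intro x r hr
    apply le_csInf (hne x)
    rintro s ⟨h, hh, a, ha, b, hb, hx, rfl⟩
    exact hr h hh a ha b hb hx
  have N_hom : ∀ c : ℝ, 0 < c → ∀ x : G, p (c • x) = c * p x := by
    intro c hc x
    apply le_antisymm
    · have hd : p (c • x) / c ≤ p x := by
        apply le_p
        intro h hh a ha b hb hx
        have h1 : ((c • x : G) : F) = c • h + (c * a) • b := by
          rw [Submodule.coe_smul, hx, smul_add, smul_smul]
        have h2 := p_le (c • x) (c • h) (N'.smul_mem c hh) (c * a)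
          (mul_nonneg hc.le ha) b hb h1
        rw [map_smul, smul_eq_mul] at h2
        rw [div_le_iff₀ hc]
        nlinarith
      rw [div_le_iff₀ hc] at hd
      linarith
    · apply le_p
      intro h hh a ha b hb hx
      have h1 : (x : F) = c⁻¹ • h + (c⁻¹ * a) • b := by
        have h0' : (x : F) = c⁻¹ • ((c • x : G) : F) := by
          rw [Submodule.coe_smul, smul_smul, inv_mul_cancel₀ (ne_of_gt hc), one_smul]
        rw [h0', hx, smul_add, smul_smul]
      have h2 := p_le x (c⁻¹ • h) (N'.smul_mem _ hh) (c⁻¹ * a)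
        (mul_nonneg (inv_nonneg.mpr hc.le) ha) b hb h1
      rw [map_smul, smul_eq_mul] at h2
      have h3 : c * (c⁻¹ * Γ h + c⁻¹ * a * e) = Γ h + a * e := by field_simp
      nlinarith
  have N_add : ∀ x y : G, p (x + y) ≤ p x + p y := by
    intro x y
    have key : ∀ r1 ∈ Dset x, ∀ r2 ∈ Dset y, p (x + y) ≤ r1 + r2 := by
      rintro r1 ⟨h1, hh1, a1, ha1, b1, hb1, hx1, rfl⟩ r2 ⟨h2, hh2, a2, ha2, b2, hb2, hx2, rfl⟩
      obtain ⟨b3, hb3, hb3eq⟩ := hcomb a1 ha1 a2 ha2 b1 hb1 b2 hb2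
      have hxy : ((x + y : G) : F) = (h1 + h2) + (a1 + a2) • b3 := by
        rw [Submodule.coe_add, hx1, hx2, ← hb3eq]; abel
      have := p_le (x + y) (h1 + h2) (N'.add_mem hh1 hh2) (a1 + a2)
        (by linarith) b3 hb3 hxy
      rw [map_add] at this
      linarith
    have h1 : ∀ r1 ∈ Dset x, p (x + y) - r1 ≤ p y := fun r1 hr1 =>
      le_csInf (hne y) fun r2 hr2 => by linarith [key r1 hr1 r2 hr2]
    have h2 : p (x + y) - p y ≤ p x :=
      le_csInf (hne x) fun r1 hr1 => by linarith [h1 r1 hr1]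
    linarith
  have hΓp : ∀ x : G, (x : F) ∈ N' → Γ (x : F) ≤ p x := by
    intro x hx
    apply le_p
    intro h hh a ha b hb hxd
    have hsub : (x : F) - h ∈ N' := sub_mem hx hh
    have heq2 : (x : F) - h = a • b := by rw [hxd]; abel
    have hb2 := hΓcone _ (fun m => (hmemN' _).mp hsub m) a ha b hb heq2
    rw [map_sub] at hb2
    have := (abs_le.mp hb2).2
    linarith
  -- Hahn-Banach extension
  set dom : Submodule ℝ ↥G := N'.comap G.subtype with hdomdef
  set fl : dom →ₗ[ℝ] ℝ := Γ.comp (G.subtype.comp dom.subtype) with hfldef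
  obtain ⟨g, hg1, hg2⟩ := exists_extension_of_le_sublinear ⟨dom, fl⟩ p N_hom N_add
    (fun x => hΓp x.1 x.2)
  -- extend from G to all of F
  obtain ⟨G', hG'⟩ := G.exists_isCompl
  set v : F →ₗ[ℝ] ℝ := g.comp (G.projectionOnto G' hG') with hvdef
  have hvG : ∀ x : ↥G, v (x : F) = g x := by
    intro x
    show g (G.projectionOnto G' hG' (x : F)) = g x
    rw [Submodule.linearProjOfIsCompl_apply_left hG' x]
  have hvN : ∀ h : F, ∀ hh : h ∈ N', v h = Γ h := by
    intro h hh
    have hG : h ∈ G := (le_sup_left : N' ≤ G) hh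
    have h1 : v h = g ⟨h, hG⟩ := hvG ⟨h, hG⟩
    rw [h1]
    exact hg1 ⟨⟨h, hG⟩, Submodule.mem_comap.mpr hh⟩
  have hvK : ∀ f ∈ K, |v f| ≤ e := by
    intro f hf
    have hfG : f ∈ G := (le_sup_right : Submodule.span ℝ K ≤ G) (Submodule.subset_span hf)
    have hupper : v f ≤ e := by
      have h1 : v f = g ⟨f, hfG⟩ := hvG ⟨f, hfG⟩
      have h2 : g ⟨f, hfG⟩ ≤ p ⟨f, hfG⟩ := hg2 _
      have h3 : p ⟨f, hfG⟩ ≤ Γ 0 + 1 * e :=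
        p_le _ 0 (zero_mem N') 1 zero_le_one f (hKB hf) (by simp)
      rw [map_zero] at h3
      linarith
    have hlower : -e ≤ v f := by
      have h1 : v (-f) = g (-⟨f, hfG⟩) := hvG (-⟨f, hfG⟩)
      have h2 : g (-⟨f, hfG⟩) ≤ p (-⟨f, hfG⟩) := hg2 _
      have h3 : p (-⟨f, hfG⟩ : ↥G) ≤ Γ 0 + 1 * e :=
        p_le _ 0 (zero_mem N') 1 zero_le_one (-f) (hBneg f (hKB hf)) (by simp)
      rw [map_zero] at h3
      rw [map_neg] at h1
      linarith
    exact abs_le.mpr ⟨hlower, hupper⟩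
  -- conclude
  obtain ⟨c, hc⟩ := funct_factor lam (Γ - v) (fun f hf => by
    have hfN : f ∈ N' := (hmemN' f).mpr hf
    simp [LinearMap.sub_apply, hvN f hfN])
  refine ⟨c, fun f hf => ?_⟩
  have h1 : Γ f - ∑ m, c m * lam m f = v f := by
    rw [← hc f]
    simp [LinearMap.sub_apply]
  rw [h1]
  exact hvK f hf

lemma pair_bound {F : Type*} [AddCommGroup F] [Module ℝ F] {M : ℕ}
    (K : Set F) (h0 : (0 : F) ∈ K)
    (lam : Fin M → F →ₗ[ℝ] ℝ) (Γ : F →ₗ[ℝ] ℝ) (Δ : (Fin M → ℝ) → ℝ)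
    (hne : (⨆ f ∈ K, ((|Γ f - Δ (fun m => lam m f)| : ℝ) : EReal)) ≠ ⊤) :
    ∀ f1 ∈ K, ∀ f2 ∈ K, (∀ m, lam m f1 = lam m f2) →
      |Γ f1 - Γ f2| ≤ 2 * (⨆ f ∈ K, ((|Γ f - Δ (fun m => lam m f)| : ℝ) : EReal)).toReal := by
  set S : EReal := ⨆ f ∈ K, ((|Γ f - Δ (fun m => lam m f)| : ℝ) : EReal) with hSdef
  have hS0 : (0 : EReal) ≤ S := by
    have h00 : ((|Γ 0 - Δ (fun m => lam m 0)| : ℝ) : EReal) ≤ S :=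
      le_iSup₂ (f := fun f (_ : f ∈ K) => ((|Γ f - Δ (fun m => lam m f)| : ℝ) : EReal)) 0 h0
    refine le_trans ?_ h00
    exact_mod_cast abs_nonneg _
  have hSbot : S ≠ ⊥ := fun h => by simp [h] at hS0
  have hSre : S = ((S.toReal : ℝ) : EReal) := (EReal.coe_toReal hne hSbot).symm
  have hpt : ∀ f ∈ K, |Γ f - Δ (fun m => lam m f)| ≤ S.toReal := by
    intro f hf
    have h1 : ((|Γ f - Δ (fun m => lam m f)| : ℝ) : EReal) ≤ S :=
      le_iSup₂ (f := fun f (_ : f ∈ K) => ((|Γ f - Δ (fun m => lam m f)| : ℝ) : EReal)) f hf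
    rw [hSre] at h1
    exact_mod_cast h1
  intro f1 h1 f2 h2 hm
  have e1 := hpt f1 h1
  have e2 := hpt f2 h2
  have hfun : (fun m => lam m f1) = fun m => lam m f2 := funext hm
  rw [hfun] at e1
  have tri : |Γ f1 - Γ f2| ≤ |Γ f1 - Δ (fun m => lam m f2)| + |Δ (fun m => lam m f2) - Γ f2| :=
    abs_sub_le _ _ _
  rw [abs_sub_comm (Δ (fun m => lam m f2)) (Γ f2)] at tri
  linarith

/-- For a convex model set containing the origin and a linear-functional quantity of
interest, a linear recovery map is near-optimal with factor 2. -/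
theorem stmt_15 {F : Type*} [AddCommGroup F] [Module ℝ F] {M : ℕ}
    (K : Set F) (hK : Convex ℝ K) (h0 : (0 : F) ∈ K)
    (lam : Fin M → F →ₗ[ℝ] ℝ) (Γ : F →ₗ[ℝ] ℝ) :
    ∃ c : Fin M → ℝ,
      ∀ Δ : (Fin M → ℝ) → ℝ,
        (⨆ f ∈ K, ((|Γ f - ∑ m, c m * lam m f| : ℝ) : EReal)) ≤
          (2 : EReal) * ⨆ f ∈ K, ((|Γ f - Δ (fun m => lam m f)| : ℝ) : EReal) := by
  classical
  set pairSet : Set ℝ :=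
    {r | ∃ f1 ∈ K, ∃ f2 ∈ K, (∀ m, lam m f1 = lam m f2) ∧ r = |Γ f1 - Γ f2|} with hPdef
  have hP0 : (0 : ℝ) ∈ pairSet := ⟨0, h0, 0, h0, fun m => rfl, by simp⟩
  by_cases hbdd : BddAbove pairSet
  · set e := sSup pairSet with hedef
    obtain ⟨c, hc⟩ := key_linear_recovery K hK h0 lam Γ e
      (fun f1 h1 f2 h2 hm => le_csSup hbdd ⟨f1, h1, f2, h2, hm, rfl⟩)
    refine ⟨c, fun Δ => ?_⟩
    by_cases hStop : (⨆ f ∈ K, ((|Γ f - Δ (fun m => lam m f)| : ℝ) : EReal)) = ⊤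
    · rw [hStop, EReal.mul_top_of_pos (by norm_num : (0 : EReal) < 2)]
      exact le_top
    · have hub := pair_bound K h0 lam Γ Δ hStop
      have heR : e ≤ 2 * (⨆ f ∈ K, ((|Γ f - Δ (fun m => lam m f)| : ℝ) : EReal)).toReal := by
        apply csSup_le ⟨0, hP0⟩
        rintro r ⟨f1, h1, f2, h2, hm, rfl⟩
        exact hub f1 h1 f2 h2 hm
      have he2S : (e : EReal) ≤
          2 * (⨆ f ∈ K, ((|Γ f - Δ (fun m => lam m f)| : ℝ) : EReal)) := by
        set S : EReal := ⨆ f ∈ K, ((|Γ f - Δ (fun m => lam m f)| : ℝ) : EReal) with hSdef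
        have hS0 : (0 : EReal) ≤ S := by
          refine le_trans ?_
            (le_iSup₂ (f := fun f (_ : f ∈ K) =>
              ((|Γ f - Δ (fun m => lam m f)| : ℝ) : EReal)) 0 h0)
          exact_mod_cast abs_nonneg _
        have hSbot : S ≠ ⊥ := fun h => by simp [h] at hS0
        have hSre : S = ((S.toReal : ℝ) : EReal) := (EReal.coe_toReal hStop hSbot).symm
        calc (e : EReal) ≤ ((2 * S.toReal : ℝ) : EReal) := EReal.coe_le_coe_iff.mpr heR
          _ = (2 : EReal) * ((S.toReal : ℝ) : EReal) := by rw [EReal.coe_mul]; norm_cast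
          _ = 2 * S := by rw [← hSre]
      refine le_trans ?_ he2S
      apply iSup₂_le
      intro f hf
      exact EReal.coe_le_coe_iff.mpr (hc f hf)
  · refine ⟨0, fun Δ => ?_⟩
    have hStop : (⨆ f ∈ K, ((|Γ f - Δ (fun m => lam m f)| : ℝ) : EReal)) = ⊤ := by
      by_contra hStop
      exact hbdd ⟨2 * (⨆ f ∈ K, ((|Γ f - Δ (fun m => lam m f)| : ℝ) : EReal)).toReal, by
        rintro r ⟨f1, h1, f2, h2, hm, rfl⟩
        exact pair_bound K h0 lam Γ Δ hStop f1 h1 f2 h2 hm⟩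
    rw [hStop, EReal.mul_top_of_pos (by norm_num : (0 : EReal) < 2)]
    exact le_top
end
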